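/- arXiv:2302.14324 — 5 statements merged into one kernel-verified Lean document; each statement's English description precedes it below -/
import Mathlib

section
/- There exists a universal constant K > 0 such that for every real t ≠ 0, every ε ∈ (0, 1], and every natural number n with n ≥ K · ( |t| + log(1/ε) / log(e + log(1/ε)/|t|) ), the degree-n Chebyshev truncation p_n(x) := I_0(t) + 2·∑_{k=1}^{n} I_k(t)·T_k(x) satisfies |p_n(x) − e^{t·x}| ≤ ε for all x ∈ [−1, 1]. -/
set_option maxHeartbeats 1000000

open Real Polynomial

/-- The modified Bessel function of the first kind (of integer order), via the
integral representation `I_k(t) = (1/π) ∫₀^π e^{t cos θ} cos(kθ) dθ`. -/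
noncomputable def besselI (k : ℕ) (t : ℝ) : ℝ :=
  (1 / π) * ∫ θ in (0 : ℝ)..π, Real.exp (t * Real.cos θ) * Real.cos (k * θ)




noncomputable def cc (k : ℕ) (t : ℝ) : ℝ :=
  ∑' m : ℕ, (t / 2) ^ (k + 2 * m) / ((m.factorial : ℝ) * (m + k).factorial)

lemma cc_term_abs (k m : ℕ) (t : ℝ) :
    |(t / 2) ^ (k + 2 * m) / ((m.factorial : ℝ) * (m + k).factorial)|
      = (|t| / 2) ^ (k + 2 * m) / ((m.factorial : ℝ) * (m + k).factorial) := by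
  rw [abs_div, abs_pow, abs_div, abs_of_nonneg
    (by positivity : (0:ℝ) ≤ (m.factorial : ℝ) * (m + k).factorial)]
  norm_num

lemma cc_term_le (k m : ℕ) {s : ℝ} (hs : 0 ≤ s) :
    (s / 2) ^ (k + 2 * m) / ((m.factorial : ℝ) * (m + k).factorial)
      ≤ (s / 2) ^ k * (((s / 2) ^ 2) ^ m / m.factorial) := by
  rw [pow_add, pow_mul, mul_div_assoc]
  refine mul_le_mul_of_nonneg_left ?_ (by positivity)
  refine div_le_div_of_nonneg_left (by positivity) (by exact_mod_cast Nat.factorial_pos m) ?_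
  exact le_mul_of_one_le_right (by positivity)
    (by exact_mod_cast Nat.one_le_iff_ne_zero.2 (Nat.factorial_ne_zero (m + k)))

lemma summable_cc (k : ℕ) (t : ℝ) :
    Summable (fun m : ℕ => (t / 2) ^ (k + 2 * m) / ((m.factorial : ℝ) * (m + k).factorial)) := by
  refine Summable.of_norm_bounded
    (g := fun m => (|t| / 2) ^ k * (((|t| / 2) ^ 2) ^ m / m.factorial))
    ((Real.summable_pow_div_factorial _).mul_left _) (fun m => ?_)
  rw [Real.norm_eq_abs, cc_term_abs]
  exact cc_term_le k m (abs_nonneg t)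

lemma hasSum_cc (k : ℕ) (t : ℝ) :
    HasSum (fun m : ℕ => (t / 2) ^ (k + 2 * m) / ((m.factorial : ℝ) * (m + k).factorial))
      (cc k t) := (summable_cc k t).hasSum

lemma cc_nonneg (k : ℕ) {s : ℝ} (hs : 0 ≤ s) : 0 ≤ cc k s :=
  tsum_nonneg (fun m => by positivity)

lemma abs_cc_le (k : ℕ) (t : ℝ) : |cc k t| ≤ cc k |t| := by
  have h2 : Summable (fun m : ℕ =>
      |(t / 2) ^ (k + 2 * m) / ((m.factorial : ℝ) * (m + k).factorial)|) := by
    simpa only [cc_term_abs] using summable_cc k |t|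
  calc |cc k t| ≤ ∑' m : ℕ, |(t / 2) ^ (k + 2 * m) / ((m.factorial : ℝ) * (m + k).factorial)| := by
        simpa only [Real.norm_eq_abs, cc] using
          norm_tsum_le_tsum_norm (f := fun m : ℕ =>
            (t / 2) ^ (k + 2 * m) / ((m.factorial : ℝ) * (m + k).factorial))
            (by simpa only [Real.norm_eq_abs] using h2)
    _ = cc k |t| := tsum_congr (fun m => cc_term_abs k m t)



lemma hasSum_exp_real (s : ℝ) :
    HasSum (fun n : ℕ => s ^ n / n.factorial) (Real.exp s) := by
  rw [Real.exp_eq_exp_ℝ]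
  exact NormedSpace.expSeries_div_hasSum_exp s

lemma factorial_bound (k m : ℕ) :
    (k + 2 * m).factorial ≤ 2 ^ (k + 2 * m) * (m.factorial * (m + k).factorial) := by
  have h := Nat.choose_mul_factorial_mul_factorial (show m ≤ k + 2 * m by omega)
  have hsub : k + 2 * m - m = m + k := by omega
  rw [hsub] at h
  have hc : (k + 2 * m).choose m ≤ 2 ^ (k + 2 * m) := by
    calc (k + 2 * m).choose m
        ≤ ∑ i ∈ Finset.range (k + 2 * m + 1), (k + 2 * m).choose i :=
          Finset.single_le_sum (fun i _ => Nat.zero_le _) (Finset.mem_range.2 (by omega))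
      _ = 2 ^ (k + 2 * m) := Nat.sum_range_choose _
  calc (k + 2 * m).factorial = (k + 2 * m).choose m * m.factorial * (m + k).factorial := h.symm
    _ ≤ 2 ^ (k + 2 * m) * m.factorial * (m + k).factorial :=
        Nat.mul_le_mul_right _ (Nat.mul_le_mul_right _ hc)
    _ = 2 ^ (k + 2 * m) * (m.factorial * (m + k).factorial) := by ring

lemma cc_term_le2 (k m : ℕ) {s : ℝ} (hs : 0 ≤ s) :
    (s / 2) ^ (k + 2 * m) / ((m.factorial : ℝ) * (m + k).factorial)
      ≤ s ^ (k + 2 * m) / ((k + 2 * m).factorial : ℝ) := by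
  rw [div_pow, div_div]
  refine div_le_div_of_nonneg_left (by positivity)
    (by exact_mod_cast Nat.factorial_pos (k + 2 * m)) ?_
  exact_mod_cast factorial_bound k m

lemma summable_tail (k : ℕ) (s : ℝ) :
    Summable (fun j : ℕ => s ^ (k + j) / ((k + j).factorial : ℝ)) :=
  (hasSum_exp_real s).summable.comp_injective (add_right_injective k)

lemma tail_le (k : ℕ) {s : ℝ} (hs : 0 ≤ s) :
    (∑' j : ℕ, s ^ (k + j) / ((k + j).factorial : ℝ))
      ≤ s ^ k / k.factorial * Real.exp s := by
  have hterm : ∀ j : ℕ, s ^ (k + j) / ((k + j).factorial : ℝ)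
      ≤ s ^ k / k.factorial * (s ^ j / j.factorial) := by
    intro j
    rw [pow_add, div_mul_div_comm]
    refine div_le_div_of_nonneg_left (by positivity)
      (by positivity) ?_
    exact_mod_cast Nat.le_of_dvd (Nat.factorial_pos _)
      (Nat.factorial_mul_factorial_dvd_factorial_add k j)
  calc (∑' j : ℕ, s ^ (k + j) / ((k + j).factorial : ℝ))
      ≤ ∑' j : ℕ, s ^ k / k.factorial * (s ^ j / j.factorial) :=
        Summable.tsum_le_tsum hterm (summable_tail k s)
          ((hasSum_exp_real s).summable.mul_left _)
    _ = s ^ k / k.factorial * Real.exp s := by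
        rw [tsum_mul_left, (hasSum_exp_real s).tsum_eq]

lemma cc_le (k : ℕ) {s : ℝ} (hs : 0 ≤ s) :
    cc k s ≤ s ^ k / k.factorial * Real.exp s := by
  refine le_trans ?_ (tail_le k hs)
  rw [← (hasSum_cc k s).tsum_eq]
  refine Summable.tsum_le_tsum_of_inj (fun m => 2 * m)
    (fun a b h => by simp only [] at h; omega)
    (fun c _ => by positivity)
    (fun m => ?_) (summable_cc k s) (summable_tail k s)
  exact cc_term_le2 k m hs

lemma summable_cc_fam {s : ℝ} (hs : 0 ≤ s) : Summable (fun k : ℕ => cc k s) := by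
  refine Summable.of_nonneg_of_le (fun k => cc_nonneg k hs) (fun k => cc_le k hs)
    (((Real.summable_pow_div_factorial s).mul_right _))

section ChunkC
open Complex


/-- reindexing equivalence -/
def eZN : ℤ × ℕ ≃ ℕ × ℕ where
  toFun p := (p.2 + p.1.toNat, p.2 + (-p.1).toNat)
  invFun q := ((q.1 : ℤ) - q.2, min q.1 q.2)
  left_inv p := by
    obtain ⟨k, m⟩ := p
    refine Prod.ext ?_ ?_ <;> simp only <;> omega
  right_inv q := by
    obtain ⟨j, l⟩ := q
    refine Prod.ext ?_ ?_ <;> simp only <;> omega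

lemma hasSum_exp_complex (w : ℂ) :
    HasSum (fun n : ℕ => w ^ n / n.factorial) (Complex.exp w) := by
  rw [Complex.exp_eq_exp_ℂ]
  exact NormedSpace.expSeries_div_hasSum_exp w

section expansion

variable (t φ : ℝ)

noncomputable def zz : ℂ := Complex.exp (φ * I)

lemma zz_ne_zero : zz φ ≠ 0 := Complex.exp_ne_zero _

lemma norm_zz : ‖zz φ‖ = 1 := by
  simp [zz, Complex.norm_exp]

lemma hasSum_f :
    HasSum (fun j : ℕ => ((t : ℂ) / 2) ^ j / j.factorial * zz φ ^ j)
      (Complex.exp ((t / 2) * zz φ)) := by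
  have h := hasSum_exp_complex (((t : ℂ) / 2) * zz φ)
  simpa [mul_pow, mul_div_assoc, mul_comm, mul_left_comm] using h

lemma hasSum_g :
    HasSum (fun l : ℕ => ((t : ℂ) / 2) ^ l / l.factorial * (zz φ)⁻¹ ^ l)
      (Complex.exp ((t / 2) * (zz φ)⁻¹)) := by
  have h := hasSum_exp_complex (((t : ℂ) / 2) * (zz φ)⁻¹)
  simpa [mul_pow, mul_div_assoc, mul_comm, mul_left_comm] using h

lemma summable_prod_fg :
    Summable (fun q : ℕ × ℕ =>
      (((t : ℂ) / 2) ^ q.1 / q.1.factorial * zz φ ^ q.1) *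
      (((t : ℂ) / 2) ^ q.2 / q.2.factorial * (zz φ)⁻¹ ^ q.2)) := by
  apply summable_mul_of_summable_norm (f := fun j : ℕ => ((t : ℂ) / 2) ^ j / j.factorial * zz φ ^ j)
    (g := fun l : ℕ => ((t : ℂ) / 2) ^ l / l.factorial * (zz φ)⁻¹ ^ l)
  · refine Summable.of_nonneg_of_le (fun j => norm_nonneg _) (fun j => ?_)
      (Real.summable_pow_div_factorial (|t| / 2))
    rw [norm_mul, norm_pow, norm_zz, one_pow, mul_one, norm_div, norm_pow]
    apply le_of_eq
    norm_num [Complex.norm_real, abs_div]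
  · refine Summable.of_nonneg_of_le (fun j => norm_nonneg _) (fun j => ?_)
      (Real.summable_pow_div_factorial (|t| / 2))
    rw [norm_mul, norm_pow, norm_inv, norm_zz, inv_one, one_pow, mul_one, norm_div, norm_pow]
    apply le_of_eq
    norm_num [Complex.norm_real, abs_div]

lemma hasSum_prod_fg :
    HasSum (fun q : ℕ × ℕ =>
      (((t : ℂ) / 2) ^ q.1 / q.1.factorial * zz φ ^ q.1) *
      (((t : ℂ) / 2) ^ q.2 / q.2.factorial * (zz φ)⁻¹ ^ q.2))
      ((Real.exp (t * Real.cos φ) : ℝ)) := by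
  have h := (hasSum_f t φ).mul (hasSum_g t φ) (summable_prod_fg t φ)
  have he : Complex.exp ((t / 2) * zz φ) * Complex.exp ((t / 2) * (zz φ)⁻¹)
      = ((Real.exp (t * Real.cos φ) : ℝ) : ℂ) := by
    rw [← Complex.exp_add, Complex.ofReal_exp]
    congr 1
    have : (zz φ)⁻¹ = Complex.exp (-(φ * I)) := by rw [zz, ← Complex.exp_neg]
    rw [this, zz]
    push_cast [Complex.ofReal_cos]
    rw [Complex.cos, neg_mul]
    ring
  rwa [he] at h

end expansion

section expansion2

variable (t φ : ℝ)

lemma fact_prod (k : ℤ) (m : ℕ) :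
    (m + k.toNat).factorial * (m + (-k).toNat).factorial
      = m.factorial * (m + k.natAbs).factorial := by
  rcases le_or_gt 0 k with hk | hk
  · have h1 : (-k).toNat = 0 := by omega
    have h2 : k.toNat = k.natAbs := by omega
    rw [h1, h2, Nat.add_zero, mul_comm]
  · have h1 : k.toNat = 0 := by omega
    have h2 : (-k).toNat = k.natAbs := by omega
    rw [h1, h2, Nat.add_zero]

lemma zz_pow_combine (k : ℤ) (m : ℕ) :
    zz φ ^ (m + k.toNat) * ((zz φ)⁻¹) ^ (m + (-k).toNat) = zz φ ^ k := by
  have hz := zz_ne_zero φ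
  rw [inv_pow, ← zpow_natCast (zz φ) (m + k.toNat), ← zpow_natCast (zz φ) (m + (-k).toNat),
    ← zpow_neg, ← zpow_add₀ hz]
  congr 1
  push_cast
  omega

lemma hasSum_fiber (k : ℤ) :
    HasSum (fun m : ℕ =>
      (((t : ℂ) / 2) ^ (m + k.toNat) / (m + k.toNat).factorial * zz φ ^ (m + k.toNat)) *
      (((t : ℂ) / 2) ^ (m + (-k).toNat) / (m + (-k).toNat).factorial
        * (zz φ)⁻¹ ^ (m + (-k).toNat)))
      ((cc k.natAbs t : ℂ) * zz φ ^ k) := by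
  have h0 := ((hasSum_cc k.natAbs t).mapL Complex.ofRealCLM).mul_right (zz φ ^ k)
  have key : (fun m : ℕ =>
      (((t : ℂ) / 2) ^ (m + k.toNat) / (m + k.toNat).factorial * zz φ ^ (m + k.toNat)) *
      (((t : ℂ) / 2) ^ (m + (-k).toNat) / (m + (-k).toNat).factorial
        * (zz φ)⁻¹ ^ (m + (-k).toNat)))
      = (fun m : ℕ => Complex.ofRealCLM
          ((t / 2) ^ (k.natAbs + 2 * m) / ((m.factorial : ℝ) * (m + k.natAbs).factorial))
          * zz φ ^ k) := by
    funext m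
    have step1 :
        (((t : ℂ) / 2) ^ (m + k.toNat) / (m + k.toNat).factorial * zz φ ^ (m + k.toNat)) *
        (((t : ℂ) / 2) ^ (m + (-k).toNat) / (m + (-k).toNat).factorial
          * (zz φ)⁻¹ ^ (m + (-k).toNat))
        = ((t : ℂ) / 2) ^ ((m + k.toNat) + (m + (-k).toNat))
            / (((m + k.toNat).factorial * (m + (-k).toNat).factorial : ℕ) : ℂ)
            * (zz φ ^ (m + k.toNat) * ((zz φ)⁻¹) ^ (m + (-k).toNat)) := by
      push_cast
      rw [pow_add]
      ring
    rw [step1, zz_pow_combine, fact_prod,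
      show (m + k.toNat) + (m + (-k).toNat) = k.natAbs + 2 * m by omega]
    rw [Complex.ofRealCLM_apply]
    push_cast
    ring
  rw [key]
  exact h0

end expansion2

section expansion3

variable (t φ : ℝ)

lemma hasSum_int_complex :
    HasSum (fun k : ℤ => (cc k.natAbs t : ℂ) * zz φ ^ k)
      ((Real.exp (t * Real.cos φ) : ℝ) : ℂ) := by
  have h2 : HasSum (fun p : ℤ × ℕ =>
      (((t : ℂ) / 2) ^ (p.2 + p.1.toNat) / (p.2 + p.1.toNat).factorial
          * zz φ ^ (p.2 + p.1.toNat)) *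
      (((t : ℂ) / 2) ^ (p.2 + (-p.1).toNat) / (p.2 + (-p.1).toNat).factorial
          * (zz φ)⁻¹ ^ (p.2 + (-p.1).toNat)))
      ((Real.exp (t * Real.cos φ) : ℝ) : ℂ) := by
    exact (Equiv.hasSum_iff eZN).2 (hasSum_prod_fg t φ)
  exact h2.prod_fiberwise (fun k => hasSum_fiber t φ k)

lemma hasSum_int_expansion :
    HasSum (fun k : ℤ => cc k.natAbs t * Real.cos (k * φ)) (Real.exp (t * Real.cos φ)) := by
  have h := (hasSum_int_complex t φ).mapL Complex.reCLM
  have key : (fun k : ℤ => Complex.reCLM ((cc k.natAbs t : ℂ) * zz φ ^ k))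
      = fun k : ℤ => cc k.natAbs t * Real.cos (k * φ) := by
    funext k
    have hz : zz φ ^ k = Complex.exp (((k * φ : ℝ) : ℂ) * I) := by
      rw [zz, ← Complex.exp_int_mul]
      congr 1
      push_cast
      ring
    rw [Complex.reCLM_apply, hz, Complex.mul_re, Complex.exp_ofReal_mul_I_re]
    simp
  rwa [key, Complex.reCLM_apply, Complex.ofReal_re] at h

end expansion3

end ChunkC


lemma hasSum_nat_expansion (t φ : ℝ) :
    HasSum (fun n : ℕ => 2 * cc n t * Real.cos (n * φ))
      (Real.exp (t * Real.cos φ) + cc 0 t) := by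
  have h := (hasSum_int_expansion t φ).nat_add_neg
  simp only [Int.natAbs_neg, Int.natAbs_natCast, Int.cast_neg, Int.cast_natCast, neg_mul,
    Real.cos_neg, Int.natAbs_zero, Int.cast_zero, zero_mul, Real.cos_zero, mul_one] at h
  rw [show (fun n : ℕ => 2 * cc n t * Real.cos (n * φ))
      = (fun n : ℕ => cc n t * Real.cos (n * φ) + cc n t * Real.cos (n * φ)) from
    funext fun n => by ring]
  exact h

lemma abs_term_le (t : ℝ) (j : ℕ) :
    |2 * cc j t * Real.cos (j * φ)| ≤ 2 * Real.exp |t| * (|t| ^ j / j.factorial) := by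
  rw [abs_mul, abs_mul, abs_two]
  have h1 : |cc j t| ≤ cc j |t| := abs_cc_le j t
  have h2 : |Real.cos (j * φ)| ≤ 1 := Real.abs_cos_le_one _
  have h3 : cc j |t| ≤ |t| ^ j / j.factorial * Real.exp |t| := cc_le j (abs_nonneg t)
  have h5 : |cc j t| * |Real.cos (j * φ)| ≤ |cc j t| :=
    mul_le_of_le_one_right (abs_nonneg _) h2
  calc 2 * |cc j t| * |Real.cos (j * φ)| = 2 * (|cc j t| * |Real.cos (j * φ)|) := by ring
    _ ≤ 2 * |cc j t| := by linarith
    _ ≤ 2 * (|t| ^ j / j.factorial * Real.exp |t|) := by linarith [h1.trans h3]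
    _ = 2 * Real.exp |t| * (|t| ^ j / j.factorial) := by ring

lemma truncation_error (t : ℝ) (n : ℕ) (φ : ℝ) :
    |Real.exp (t * Real.cos φ)
        - (cc 0 t + 2 * ∑ k ∈ Finset.Icc 1 n, cc k t * Real.cos (k * φ))|
      ≤ 2 * Real.exp (2 * |t|) * (|t| ^ (n + 1) / (n + 1).factorial) := by
  set h : ℕ → ℝ := fun j => 2 * cc j t * Real.cos (j * φ) with hh
  have hsum : Summable h := (hasSum_nat_expansion t φ).summable
  have htsum : ∑' j, h j = Real.exp (t * Real.cos φ) + cc 0 t :=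
    (hasSum_nat_expansion t φ).tsum_eq
  have hsplit := Summable.sum_add_tsum_nat_add (f := h) (n + 1) hsum
  have hpart : ∑ i ∈ Finset.range (n + 1), h i
      = 2 * cc 0 t + 2 * ∑ k ∈ Finset.Icc 1 n, cc k t * Real.cos (k * φ) := by
    rw [Finset.range_eq_Ico, Finset.sum_eq_sum_Ico_succ_bot (Nat.succ_pos n), Nat.succ_eq_add_one, Finset.Ico_add_one_right_eq_Icc,
      Finset.mul_sum]
    simp only [hh, Nat.cast_zero, zero_mul, Real.cos_zero, mul_one]
    congr 1
    exact Finset.sum_congr rfl fun x _ => by ring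
  have herr : Real.exp (t * Real.cos φ)
      - (cc 0 t + 2 * ∑ k ∈ Finset.Icc 1 n, cc k t * Real.cos (k * φ))
      = ∑' i, h (i + (n + 1)) := by
    have := hsplit
    rw [hpart] at this
    linarith [this, htsum]
  rw [herr]
  have habs : ∀ i : ℕ, |h (i + (n + 1))|
      ≤ 2 * Real.exp |t| * (|t| ^ ((n + 1) + i) / ((n + 1) + i).factorial) := by
    intro i
    rw [show (n + 1) + i = i + (n + 1) by omega]
    exact abs_term_le t (i + (n + 1))
  have hbsum : Summable (fun i : ℕ =>
      2 * Real.exp |t| * (|t| ^ ((n + 1) + i) / ((n + 1) + i).factorial)) :=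
    (summable_tail (n + 1) |t|).mul_left _
  have hs2 : Summable (fun i : ℕ => |h (i + (n + 1))|) :=
    Summable.of_nonneg_of_le (fun i => abs_nonneg _) habs hbsum
  calc |∑' i, h (i + (n + 1))| ≤ ∑' i, |h (i + (n + 1))| := by
        simpa [Real.norm_eq_abs] using
          norm_tsum_le_tsum_norm (f := fun i : ℕ => h (i + (n + 1)))
            (by simpa [Real.norm_eq_abs] using hs2)
    _ ≤ ∑' i, 2 * Real.exp |t| * (|t| ^ ((n + 1) + i) / ((n + 1) + i).factorial) := by
        refine Summable.tsum_le_tsum habs ?_ hbsum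
        refine Summable.of_nonneg_of_le (fun i => abs_nonneg _) habs hbsum
    _ = 2 * Real.exp |t| * ∑' i, (|t| ^ ((n + 1) + i) / ((n + 1) + i).factorial) := by
        rw [tsum_mul_left]
    _ ≤ 2 * Real.exp |t| * (|t| ^ (n + 1) / (n + 1).factorial * Real.exp |t|) := by
        have := tail_le (n + 1) (abs_nonneg t)
        have h2 : (0:ℝ) ≤ 2 * Real.exp |t| := by positivity
        exact mul_le_mul_of_nonneg_left this h2
    _ = 2 * Real.exp (2 * |t|) * (|t| ^ (n + 1) / (n + 1).factorial) := by
        rw [show (2:ℝ) * |t| = |t| + |t| by ring, Real.exp_add]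
        ring

section ChunkI
open intervalIntegral MeasureTheory Filter Topology

lemma integral_cos_int (j : ℤ) (hj : j ≠ 0) :
    ∫ θ in (0:ℝ)..π, Real.cos (j * θ) = 0 := by
  have hc : (j : ℝ) ≠ 0 := Int.cast_ne_zero.2 hj
  have h : (j : ℝ) * ∫ θ in (0:ℝ)..π, Real.cos (j * θ) = 0 := by
    rw [mul_integral_comp_mul_left (a := (0:ℝ)) (b := π) (c := (j:ℝ)) (f := Real.cos),
      integral_cos]
    simp [Real.sin_int_mul_pi]
  rcases mul_eq_zero.1 h with h' | h'
  · exact absurd h' hc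
  · exact h'

lemma integral_cos_mul_cos (m k : ℕ) :
    ∫ θ in (0:ℝ)..π, Real.cos (m * θ) * Real.cos (k * θ)
      = if m = k then (if k = 0 then π else π / 2) else 0 := by
  have key : ∀ θ : ℝ, Real.cos (m * θ) * Real.cos (k * θ)
      = (Real.cos ((((m : ℤ) + k) : ℤ) * θ) + Real.cos ((((m : ℤ) - k) : ℤ) * θ)) / 2 := by
    intro θ
    push_cast
    rw [show ((m : ℝ) + k) * θ = m * θ + k * θ by ring,
      show ((m : ℝ) - k) * θ = m * θ - k * θ by ring,
      Real.cos_add, Real.cos_sub]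
    ring
  rw [intervalIntegral.integral_congr (g := fun θ =>
      (Real.cos ((((m : ℤ) + k) : ℤ) * θ) + Real.cos ((((m : ℤ) - k) : ℤ) * θ)) / 2)
      (fun θ _ => key θ)]
  have hint : ∀ j : ℤ, IntervalIntegrable (fun θ : ℝ => Real.cos (j * θ))
      MeasureTheory.volume 0 π := by
    intro j
    exact (Real.continuous_cos.comp (continuous_const.mul continuous_id)).intervalIntegrable 0 π
  rw [intervalIntegral.integral_div, intervalIntegral.integral_add (hint _) (hint _)]
  by_cases hmk : m = k
  · subst hmk
    by_cases hm : m = 0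
    · subst hm
      norm_num [Real.pi_pos.le]
    · have h1 : ∫ θ in (0:ℝ)..π, Real.cos ((((m : ℤ) + m) : ℤ) * θ) = 0 :=
        integral_cos_int _ (by exact_mod_cast fun h => hm (by omega))
      have h2 : ∫ θ in (0:ℝ)..π, Real.cos ((((m : ℤ) - m) : ℤ) * θ) = π := by
        norm_num
      rw [h1, h2]
      simp [hm]
  · have h1 : ∫ θ in (0:ℝ)..π, Real.cos ((((m : ℤ) + k) : ℤ) * θ) = 0 := by
      apply integral_cos_int
      omega
    have h2 : ∫ θ in (0:ℝ)..π, Real.cos ((((m : ℤ) - k) : ℤ) * θ) = 0 := by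
      apply integral_cos_int
      omega
    rw [h1, h2]
    simp [hmk]




lemma cos_nat_continuous (j : ℕ) : Continuous (fun θ : ℝ => Real.cos (j * θ)) :=
  Real.continuous_cos.comp (continuous_const.mul continuous_id)

lemma integral_expansion (k : ℕ) (t : ℝ) :
    ∫ θ in (0:ℝ)..π, (Real.exp (t * Real.cos θ) + cc 0 t) * Real.cos (k * θ)
      = (if k = 0 then 2 * cc 0 t * π else cc k t * π) := by
  set f : ℝ → ℝ := fun θ => (Real.exp (t * Real.cos θ) + cc 0 t) * Real.cos (k * θ) with hf
  set G : ℕ → ℝ → ℝ := fun N θ =>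
    (∑ j ∈ Finset.range N, 2 * cc j t * Real.cos (j * θ)) * Real.cos (k * θ) with hG
  have hcont : ∀ N, Continuous (G N) := by
    intro N
    exact (continuous_finset_sum _ fun j _ =>
      continuous_const.mul (cos_nat_continuous j)).mul (cos_nat_continuous k)
  have hfcont : Continuous f :=
    ((Real.continuous_exp.comp (continuous_const.mul Real.continuous_cos)).add
      continuous_const).mul (cos_nat_continuous k)
  set B : ℝ := ∑' j : ℕ, 2 * cc j |t| with hB
  -- dominated convergence
  have h_bound : ∀ N θ, |G N θ| ≤ B := by
    intro N θ
    rw [hG]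
    calc |(∑ j ∈ Finset.range N, 2 * cc j t * Real.cos (j * θ)) * Real.cos (k * θ)|
        ≤ |∑ j ∈ Finset.range N, 2 * cc j t * Real.cos (j * θ)| :=
          mul_le_of_le_one_right (abs_nonneg _) (Real.abs_cos_le_one _) |>.trans_eq' (abs_mul _ _).symm
      _ ≤ ∑ j ∈ Finset.range N, |2 * cc j t * Real.cos (j * θ)| :=
          Finset.abs_sum_le_sum_abs _ _
      _ ≤ ∑ j ∈ Finset.range N, 2 * cc j |t| := by
          refine Finset.sum_le_sum fun j _ => ?_
          rw [abs_mul, abs_mul, abs_two]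
          calc 2 * |cc j t| * |Real.cos (j * θ)| ≤ 2 * |cc j t| * 1 := by
                have := abs_nonneg (cc j t); gcongr; exact Real.abs_cos_le_one _
            _ ≤ 2 * cc j |t| := by
                rw [mul_one]; have := abs_cc_le j t; linarith
      _ ≤ B := by
          rw [hB]
          refine Summable.sum_le_tsum _ (fun j _ => by
            have := cc_nonneg j (abs_nonneg t); positivity) ?_
          exact (summable_cc_fam (abs_nonneg t)).mul_left 2
  have h_lim : ∀ θ, Tendsto (fun N => G N θ) atTop (𝓝 (f θ)) := by
    intro θ
    have h := (hasSum_nat_expansion t θ).tendsto_sum_nat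
    exact (h.mul_const (Real.cos (k * θ)))
  have key : Tendsto (fun N => ∫ θ in (0:ℝ)..π, G N θ) atTop
      (𝓝 (∫ θ in (0:ℝ)..π, f θ)) := by
    rw [intervalIntegral.integral_of_le Real.pi_pos.le]
    have : ∀ N, (∫ θ in (0:ℝ)..π, G N θ) = ∫ θ in Set.Ioc (0:ℝ) π, G N θ := fun N =>
      intervalIntegral.integral_of_le Real.pi_pos.le
    simp only [this]
    refine MeasureTheory.tendsto_integral_of_dominated_convergence (fun _ => B)
      (fun N => ((hcont N).aestronglyMeasurable)) ?_ ?_ ?_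
    · refine MeasureTheory.integrableOn_const (ne_of_lt ?_)
      rw [Real.volume_Ioc]
      exact ENNReal.ofReal_lt_top
    · intro N
      exact Filter.Eventually.of_forall fun θ => by
        rw [Real.norm_eq_abs]; exact h_bound N θ
    · exact Filter.Eventually.of_forall fun θ => h_lim θ
  -- compute the integral of G N for large N
  have hGN : ∀ N, N ≥ k + 1 → (∫ θ in (0:ℝ)..π, G N θ)
      = (if k = 0 then 2 * cc 0 t * π else cc k t * π) := by
    intro N hN
    rw [hG]
    have : ∀ θ : ℝ, (∑ j ∈ Finset.range N, 2 * cc j t * Real.cos (j * θ)) * Real.cos (k * θ)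
        = ∑ j ∈ Finset.range N, 2 * cc j t * (Real.cos (j * θ) * Real.cos (k * θ)) := by
      intro θ
      rw [Finset.sum_mul]
      exact Finset.sum_congr rfl fun j _ => by ring
    rw [intervalIntegral.integral_congr (fun θ _ => this θ)]
    rw [intervalIntegral.integral_finset_sum]
    · have heach : ∀ j, (∫ θ in (0:ℝ)..π, 2 * cc j t * (Real.cos (j * θ) * Real.cos (k * θ)))
          = 2 * cc j t * (if j = k then (if k = 0 then π else π / 2) else 0) := by
        intro j
        rw [intervalIntegral.integral_const_mul, integral_cos_mul_cos j k]
      simp only [heach]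
      rw [Finset.sum_eq_single k]
      · simp only [if_pos rfl]
        by_cases hk : k = 0 <;> simp [hk] <;> ring
      · intro j _ hj
        simp [hj]
      · intro hk
        exact absurd (Finset.mem_range.2 (by omega)) hk
    · intro j _
      exact (continuous_const.mul ((cos_nat_continuous j).mul
        (cos_nat_continuous k))).intervalIntegrable _ _
  have hconst : Tendsto (fun N => ∫ θ in (0:ℝ)..π, G N θ) atTop
      (𝓝 (if k = 0 then 2 * cc 0 t * π else cc k t * π)) := by
    refine Tendsto.congr' ?_ tendsto_const_nhds
    filter_upwards [Filter.eventually_ge_atTop (k + 1)] with N hN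
    exact (hGN N hN).symm
  exact tendsto_nhds_unique key hconst

lemma besselI_eq_cc (k : ℕ) (t : ℝ) : besselI k t = cc k t := by
  have hpi : (π : ℝ) ≠ 0 := Real.pi_ne_zero
  have hsplit : ∫ θ in (0:ℝ)..π, (Real.exp (t * Real.cos θ) + cc 0 t) * Real.cos (k * θ)
      = (∫ θ in (0:ℝ)..π, Real.exp (t * Real.cos θ) * Real.cos (k * θ))
        + cc 0 t * ∫ θ in (0:ℝ)..π, Real.cos (k * θ) := by
    rw [← intervalIntegral.integral_const_mul, ← intervalIntegral.integral_add]
    · exact intervalIntegral.integral_congr fun θ _ => by ring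
    · exact ((Real.continuous_exp.comp (continuous_const.mul Real.continuous_cos)).mul
        (cos_nat_continuous k)).intervalIntegrable _ _
    · exact (continuous_const.mul (cos_nat_continuous k)).intervalIntegrable _ _
  have hE := integral_expansion k t
  rw [hsplit] at hE
  by_cases hk : k = 0
  · subst hk
    have hck : ∫ θ in (0:ℝ)..π, Real.cos ((0:ℕ) * θ) = π := by
      norm_num
    rw [hck] at hE
    simp only [if_true, eq_self_iff_true] at hE
    rw [besselI]
    have : ∫ θ in (0:ℝ)..π, Real.exp (t * Real.cos θ) * Real.cos ((0:ℕ) * θ) = cc 0 t * π := by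
      linarith
    rw [this]
    field_simp
  · have hck : ∫ θ in (0:ℝ)..π, Real.cos ((k:ℕ) * θ) = 0 := by
      have := integral_cos_int k (by exact_mod_cast hk)
      simpa using this
    rw [hck, mul_zero, add_zero, if_neg hk] at hE
    rw [besselI, hE]
    field_simp

end ChunkI

lemma pow_div_fact_le_exp0 (x : ℝ) (hx : 0 ≤ x) (m : ℕ) :
    x ^ m / m.factorial ≤ Real.exp x := by
  refine le_trans ?_ (Real.sum_le_exp_of_nonneg hx (m + 1))
  exact Finset.single_le_sum (f := fun i => x ^ i / i.factorial)
    (fun i _ => by positivity) (Finset.mem_range.2 (Nat.lt_succ_self m))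

lemma main_ineq {s L : ℝ} (hs : 0 < s) (hL : 0 ≤ L) {n : ℕ}
    (hn : (n : ℝ) ≥ 60 * (s + L / Real.log (Real.exp 1 + L / s))) :
    2 * Real.exp (2 * s) * (s ^ (n + 1) / (n + 1).factorial) ≤ Real.exp (-L) := by
  set u : ℝ := Real.exp 1 + L / s with hu
  set M : ℝ := Real.log u with hM
  have hu1 : Real.exp 1 ≤ u := by
    rw [hu]; nlinarith [div_nonneg hL hs.le]
  have hupos : 0 < u := lt_of_lt_of_le (Real.exp_pos 1) hu1
  have hM1 : 1 ≤ M := by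
    rw [show (1:ℝ) = Real.log (Real.exp 1) from (Real.log_exp 1).symm]
    exact Real.log_le_log (Real.exp_pos 1) hu1
  have hMpos : 0 < M := lt_of_lt_of_le one_pos hM1
  clear_value u
  clear_value M
  have hn' : (n : ℝ) ≥ 60 * s + 60 * (L / M) := by linarith [hn]
  set N : ℝ := (n : ℝ) + 1 with hN
  clear_value N
  have hN60s : N ≥ 60 * s := by
    have h0 : 60 * (L / M) ≥ 0 := by positivity
    rw [hN]; linarith
  have hNpos : 0 < N := lt_of_lt_of_le (by positivity) hN60s
  have hN2 : N ≥ 2 := by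
    have h1 : (n : ℝ) > 0 := by
      have h2 : 60 * s > 0 := by positivity
      have h0 : 60 * (L / M) ≥ 0 := by positivity
      linarith
    have : (1 : ℝ) ≤ (n : ℝ) := by
      exact_mod_cast Nat.one_le_iff_ne_zero.2 (by
        intro h; rw [h] at h1; norm_num at h1)
    rw [hN]; linarith
  have hNM : N * M ≥ 60 * L := by
    have h1 : (n : ℝ) ≥ 60 * (L / M) := by
      have : 60 * s ≥ 0 := by positivity
      linarith
    have h2 : (n : ℝ) * M ≥ 60 * L := by
      rw [ge_iff_le, ← div_le_iff₀ hMpos]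
      calc 60 * L / M = 60 * (L / M) := by ring
        _ ≤ (n : ℝ) := h1
    nlinarith [hMpos, hN]
  set R : ℝ := N / (Real.exp 1 * s) with hR
  clear_value R
  have hRpos : 0 < R := by rw [hR]; positivity
  have he1 : (0:ℝ) < Real.exp 1 := Real.exp_pos 1
  have hexp1_lt : Real.exp 1 < 2.7182818286 := Real.exp_one_lt_d9
  have hexp1_le3 : Real.exp 1 ≤ 3 := by linarith
  have hR_ge : Real.exp 3 ≤ R := by
    have h60 : Real.exp 4 ≤ 60 := by
      have h4 : Real.exp 4 = (Real.exp 1) ^ 4 := by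
        rw [← Real.exp_nat_mul]; norm_num
      have h5 : Real.exp 1 ^ 4 < (2.7182818286 : ℝ) ^ 4 :=
        pow_lt_pow_left₀ hexp1_lt he1.le (by norm_num)
      have h6 : ((2.7182818286 : ℝ)) ^ 4 ≤ 60 := by norm_num
      linarith [h4, h5, h6]
    have hstep : R ≥ 60 / Real.exp 1 := by
      rw [hR, ge_iff_le, div_le_div_iff₀ he1 (by positivity)]
      nlinarith [hN60s]
    refine le_trans ?_ hstep
    rw [le_div_iff₀ he1, ← Real.exp_add]
    norm_num
    exact h60
  have hlogR3 : Real.log R ≥ 3 := by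
    calc (3:ℝ) = Real.log (Real.exp 3) := (Real.log_exp 3).symm
      _ ≤ Real.log R := Real.log_le_log (Real.exp_pos 3) hR_ge
  have hlog2 : Real.log 2 ≤ 1 := by
    rw [show (1:ℝ) = Real.log (Real.exp 1) from (Real.log_exp 1).symm]
    exact Real.log_le_log (by norm_num) (by linarith [Real.add_one_le_exp 1])
  have hlogRM : Real.log R ≥ M / 10 := by
    by_cases hcase : u ≤ 2 * Real.exp 1
    · have hMle : M ≤ Real.log 2 + 1 := by
        rw [hM]
        calc Real.log u ≤ Real.log (2 * Real.exp 1) := Real.log_le_log hupos hcase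
          _ = Real.log 2 + 1 := by
            rw [Real.log_mul (by norm_num) (Real.exp_ne_zero 1), Real.log_exp]
      linarith
    · push_neg at hcase
      have hue : Real.exp M = u := by rw [hM]; exact Real.exp_log hupos
      have hLs : L / s = u - Real.exp 1 := by rw [hu]; ring
      have hL2 : L ≥ s * u / 2 := by
        have h5 : L / s ≥ u / 2 := by rw [hLs]; linarith
        have h6 : L = (L / s) * s := by field_simp
        rw [h6]; nlinarith [hs]
      have hNlb : N * M ≥ 30 * (s * u) := by nlinarith [hNM]
      have hRlb : R ≥ 10 * u / M := by
        rw [hR, ge_iff_le, div_le_div_iff₀ hMpos (by positivity)]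
        nlinarith [hNlb, hupos, hs, hexp1_le3]
      have hexpM10 : Real.exp (M / 10) ≤ 10 * u / M := by
        rw [← hue, le_div_iff₀ hMpos]
        have h9 : 9 * M / 10 ≤ Real.exp (9 * M / 10) := by
          linarith [Real.add_one_le_exp (9 * M / 10)]
        have hsplit : Real.exp M = Real.exp (M / 10) * Real.exp (9 * M / 10) := by
          rw [← Real.exp_add]; ring_nf
        nlinarith [Real.exp_pos (M / 10), hMpos]
      calc M / 10 = Real.log (Real.exp (M / 10)) := (Real.log_exp _).symm
        _ ≤ Real.log R := Real.log_le_log (Real.exp_pos _) (le_trans hexpM10 hRlb)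
  -- core inequality
  have hcore : N * Real.log R ≥ L + 2 * s + Real.log 2 := by
    have hc1 : N * Real.log R ≥ (N / 2) * 3 + (N / 2) * (M / 10) := by
      nlinarith [hlogR3, hlogRM, hNpos]
    have hc2 : (N / 2) * (M / 10) = N * M / 20 := by ring
    have hc3 : N * M / 20 ≥ 3 * L := by linarith [hNM]
    have hc4 : (N / 2) * 3 ≥ 2 * s + Real.log 2 := by
      have : N ≥ 2 * s := by linarith [hN60s, hs]
      linarith [hN2]
    linarith
  -- assembling
  have hcast : ((n : ℝ) + 1) = ((n + 1 : ℕ) : ℝ) := by push_cast; ring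
  have hfac : N ^ (n + 1) / ((n + 1).factorial : ℝ) ≤ Real.exp N :=
    pow_div_fact_le_exp0 N hNpos.le (n + 1)
  have hexpN : Real.exp N = Real.exp 1 ^ (n + 1) := by
    rw [hN, hcast, show ((n + 1 : ℕ) : ℝ) = ((n + 1 : ℕ) : ℝ) * 1 by ring, Real.exp_nat_mul]
  have h1 : s ^ (n + 1) / ((n + 1).factorial : ℝ) ≤ (Real.exp 1 * s / N) ^ (n + 1) := by
    have heq : s ^ (n + 1) / ((n + 1).factorial : ℝ)
        = (s / N) ^ (n + 1) * (N ^ (n + 1) / (n + 1).factorial) := by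
      rw [div_pow]
      field_simp
    rw [heq]
    calc (s / N) ^ (n + 1) * (N ^ (n + 1) / ((n + 1).factorial : ℝ))
        ≤ (s / N) ^ (n + 1) * Real.exp N :=
          mul_le_mul_of_nonneg_left hfac (by positivity)
      _ = (Real.exp 1 * s / N) ^ (n + 1) := by
          rw [hexpN, ← mul_pow]
          congr 1
          field_simp
  have hx : 0 < Real.exp 1 * s / (((n + 1 : ℕ) : ℝ)) := by positivity
  have h2 : (Real.exp 1 * s / N) ^ (n + 1) = Real.exp (N * Real.log (Real.exp 1 * s / N)) := by
    rw [hN, hcast, Real.exp_nat_mul, Real.exp_log hx]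
  have hlogx : Real.log (Real.exp 1 * s / N) = - Real.log R := by
    rw [hR, ← Real.log_inv]
    congr 1
    field_simp
  calc 2 * Real.exp (2 * s) * (s ^ (n + 1) / ((n + 1).factorial : ℝ))
      ≤ 2 * Real.exp (2 * s) * (Real.exp 1 * s / N) ^ (n + 1) := by
        refine mul_le_mul_of_nonneg_left h1 (by positivity)
    _ = Real.exp (Real.log 2 + 2 * s + N * Real.log (Real.exp 1 * s / N)) := by
        rw [h2, Real.exp_add, Real.exp_add, Real.exp_log two_pos]
    _ ≤ Real.exp (-L) := by
        refine Real.exp_le_exp.2 ?_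
        rw [hlogx]
        linarith [hcore]




/-- **Chebyshev truncation of the exponential, small-`ε` regime**
(Theorem 3.5, case `ε ≤ 1`): degree
`n ≳ |t| + log(1/ε)/log(e + log(1/ε)/|t|)` suffices for an `ε`-uniform
approximation of `e^{tx}` on `[-1, 1]`. -/
theorem exp_chebyshev_truncation_small_eps :
    ∃ K : ℝ, 0 < K ∧
      ∀ t : ℝ, t ≠ 0 → ∀ ε : ℝ, 0 < ε → ε ≤ 1 → ∀ n : ℕ,
        (n : ℝ) ≥
          K * (|t| + Real.log (1 / ε) /
            Real.log (Real.exp 1 + Real.log (1 / ε) / |t|)) →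
        ∀ x : ℝ, x ∈ Set.Icc (-1 : ℝ) 1 →
          |besselI 0 t +
              2 * ∑ k ∈ Finset.Icc 1 n,
                besselI k t * (Polynomial.Chebyshev.T ℝ (k : ℤ)).eval x -
            Real.exp (t * x)| ≤ ε := by
  refine ⟨60, by norm_num, ?_⟩
  intro t ht ε hε hε1 n hn x hx
  have hs : 0 < |t| := abs_pos.2 ht
  have hL0 : 0 ≤ Real.log (1 / ε) := by
    rw [one_div, Real.log_inv]
    have := Real.log_nonpos hε.le hε1
    linarith
  set φ := Real.arccos x with hφ
  have hcos : Real.cos φ = x := Real.cos_arccos hx.1 hx.2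
  have hT : ∀ k : ℕ, (Polynomial.Chebyshev.T ℝ (k : ℤ)).eval x = Real.cos (k * φ) := by
    intro k
    rw [← hcos, Polynomial.Chebyshev.T_real_cos]
    norm_num
  have hsum_eq : besselI 0 t + 2 * ∑ k ∈ Finset.Icc 1 n,
        besselI k t * (Polynomial.Chebyshev.T ℝ (k : ℤ)).eval x
      = cc 0 t + 2 * ∑ k ∈ Finset.Icc 1 n, cc k t * Real.cos (k * φ) := by
    rw [besselI_eq_cc]
    congr 2
    exact Finset.sum_congr rfl fun k _ => by rw [besselI_eq_cc, hT k]
  rw [hsum_eq, show t * x = t * Real.cos φ by rw [hcos], abs_sub_comm]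
  calc |Real.exp (t * Real.cos φ)
        - (cc 0 t + 2 * ∑ k ∈ Finset.Icc 1 n, cc k t * Real.cos (k * φ))|
      ≤ 2 * Real.exp (2 * |t|) * (|t| ^ (n + 1) / (n + 1).factorial) :=
        truncation_error t n φ
    _ ≤ Real.exp (-(Real.log (1 / ε))) := main_ineq hs hL0 hn
    _ = ε := by
        rw [one_div, Real.log_inv, neg_neg, Real.exp_log hε]
end

section
/- There exists a universal constant C ≥ 1 with the following property. For every δ ∈ (0, 1) and ε ∈ (0, 1), there exists an odd polynomial p ∈ ℝ[X] (meaning p(−x) = −p(x) for all x) of degree at most C·(1/δ)·log(1/(δ·ε)) such that |p(x)| ≤ 1 for all x ∈ [−1, 1] and |p(x) − (2/π)·arcsin(x)| ≤ ε for all x ∈ [−(1−δ), 1−δ]. -/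
open Real Polynomial Finset

namespace ArcsinApprox

/-- central binomial coefficients over 4^k, defined recursively -/
noncomputable def cc : ℕ → ℝ
  | 0 => 1
  | (k+1) => cc k * (2*k+1) / (2*k+2)

lemma cc_pos (k : ℕ) : 0 < cc k := by
  induction k with
  | zero => norm_num [cc]
  | succ k ih => rw [cc]; positivity

lemma cc_le_one (k : ℕ) : cc k ≤ 1 := by
  induction k with
  | zero => norm_num [cc]
  | succ k ih =>
      rw [cc, div_le_one (by positivity)]
      nlinarith [cc_pos k]

/-- partial sums of the binomial series for (1-u)^{-1/2} -/
noncomputable def S (n : ℕ) (u : ℝ) : ℝ := ∑ k ∈ range (n+1), cc k * u^k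

noncomputable def S' (n : ℕ) (u : ℝ) : ℝ := ∑ k ∈ range (n+1), (k : ℝ) * cc k * u^(k-1)

lemma key_identity (n : ℕ) (u : ℝ) :
    (1-u) * S' n u = (1/2) * S n u - (n+1) * cc (n+1) * u^n := by
  induction n with
  | zero =>
      simp [S, S', cc]
  | succ n ih =>
      have hrec : cc (n+2) = cc (n+1) * (2*(n+1)+1) / (2*(n+1)+2) := by
        show cc (n+1+1) = _
        rw [cc]
        push_cast
        ring_nf
      have hS : S (n+1) u = S n u + cc (n+1) * u^(n+1) := Finset.sum_range_succ _ _
      have hS' : S' (n+1) u = S' n u + ((n+1:ℕ) : ℝ) * cc (n+1) * u^((n+1)-1) :=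
        Finset.sum_range_succ _ _
      rw [hS, hS']
      rw [mul_add, ih, hrec]
      have h1 : (n+1) - 1 = n := by omega
      rw [h1]
      push_cast
      field_simp
      ring

lemma hasDerivAt_S (n : ℕ) (u : ℝ) : HasDerivAt (S n) (S' n u) u := by
  have h : HasDerivAt (fun u : ℝ => ∑ k ∈ range (n+1), cc k * u^k)
      (∑ k ∈ range (n+1), cc k * ((k:ℝ) * u^(k-1))) u :=
    HasDerivAt.fun_sum fun k _ => (hasDerivAt_pow k u).const_mul _
  have he : (∑ k ∈ range (n+1), cc k * ((k:ℝ) * u^(k-1))) = S' n u := by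
    unfold S'
    apply Finset.sum_congr rfl; intro k _; ring
  rw [he] at h
  exact h.congr_deriv rfl

noncomputable def A (n : ℕ) (u : ℝ) : ℝ := 1 - Real.sqrt (1-u) * S n u

lemma hasDerivAt_A (n : ℕ) {u : ℝ} (hu1 : u < 1) :
    HasDerivAt (A n) ((n+1) * cc (n+1) * u^n / Real.sqrt (1-u)) u := by
  have hpos : (0:ℝ) < 1 - u := by linarith
  have hs : Real.sqrt (1-u) ≠ 0 := by positivity
  have h1 : HasDerivAt (fun u : ℝ => 1 - u) (-1) u := by
    simpa using (hasDerivAt_id u).const_sub 1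
  have h2 : HasDerivAt (fun u : ℝ => Real.sqrt (1-u)) (1 / (2 * Real.sqrt (1-u)) * (-1)) u :=
    (Real.hasDerivAt_sqrt (ne_of_gt hpos)).comp u h1
  have h3 : HasDerivAt (fun u : ℝ => Real.sqrt (1-u) * S n u)
      (1 / (2 * Real.sqrt (1-u)) * (-1) * S n u + Real.sqrt (1-u) * S' n u) u :=
    h2.mul (hasDerivAt_S n u)
  have h4 := h3.const_sub 1
  have hsq : Real.sqrt (1-u) * Real.sqrt (1-u) = 1 - u := Real.mul_self_sqrt hpos.le
  have hid := key_identity n u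
  have hval : -(1 / (2 * Real.sqrt (1-u)) * (-1) * S n u + Real.sqrt (1-u) * S' n u)
      = (n+1) * cc (n+1) * u^n / Real.sqrt (1-u) := by
    rw [eq_div_iff hs]
    field_simp
    linear_combination (-2 * S' n u) * hsq + (-2) * hid
  rw [hval] at h4
  exact h4

lemma S_cont (n : ℕ) : Continuous (S n) :=
  continuous_finset_sum _ fun k _ => continuous_const.mul (continuous_pow k)

lemma A_cont (n : ℕ) : Continuous (A n) :=
  continuous_const.sub ((Real.continuous_sqrt.comp (continuous_const.sub continuous_id)).mul (S_cont n))

lemma S_zero (n : ℕ) : S n 0 = 1 := by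
  rw [S]
  rw [Finset.sum_eq_single 0]
  · simp [cc]
  · intro k _ hk; simp [zero_pow hk]
  · intro h; simp at h

lemma A_zero (n : ℕ) : A n 0 = 0 := by simp [A, S_zero]

lemma A_bounds (n : ℕ) {u : ℝ} (h0 : 0 ≤ u) (h1 : u < 1) :
    0 ≤ A n u ∧ A n u ≤ u^(n+1) / Real.sqrt (1-u) := by
  rcases eq_or_lt_of_le h0 with h | h
  · simp [← h, A_zero]
  have hint : interior (Set.Icc (0:ℝ) u) = Set.Ioo 0 u := interior_Icc
  have hlt1 : ∀ t ∈ Set.Ioo (0:ℝ) u, t < 1 := fun t ht => lt_trans ht.2 h1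
  constructor
  · have hmono : MonotoneOn (A n) (Set.Icc 0 u) := by
      apply monotoneOn_of_deriv_nonneg (convex_Icc 0 u) (A_cont n).continuousOn
      · intro t ht
        rw [hint] at ht
        exact ((hasDerivAt_A n (hlt1 t ht)).differentiableAt).differentiableWithinAt
      · intro t ht
        rw [hint] at ht
        rw [(hasDerivAt_A n (hlt1 t ht)).deriv]
        have := cc_pos (n+1)
        have ht0 : (0:ℝ) ≤ t := ht.1.le
        positivity
    have := hmono (Set.left_mem_Icc.2 h0) (Set.mem_Icc.2 ⟨h0, le_refl u⟩) h0
    rwa [A_zero] at this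
  · set g : ℝ → ℝ := fun t => t^(n+1) / Real.sqrt (1-u) - A n t with hg
    have hgd : ∀ t, t < 1 → HasDerivAt g
        ((((n:ℝ)+1) * t^n) / Real.sqrt (1-u) - (n+1) * cc (n+1) * t^n / Real.sqrt (1-t)) t := by
      intro t ht
      have h1' : HasDerivAt (fun t : ℝ => t^(n+1) / Real.sqrt (1-u))
          ((((n:ℝ)+1) * t^n) / Real.sqrt (1-u)) t := by
        have := (hasDerivAt_pow (n+1) t).div_const (Real.sqrt (1-u))
        simpa using this
      exact h1'.sub (hasDerivAt_A n ht)
    have hgcont : Continuous g :=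
      ((continuous_pow (n+1)).div_const _).sub (A_cont n)
    have hmono : MonotoneOn g (Set.Icc 0 u) := by
      apply monotoneOn_of_deriv_nonneg (convex_Icc 0 u) hgcont.continuousOn
      · intro t ht
        rw [hint] at ht
        exact (hgd t (hlt1 t ht)).differentiableAt.differentiableWithinAt
      · intro t ht
        rw [hint] at ht
        rw [(hgd t (hlt1 t ht)).deriv]
        have htu : Real.sqrt (1-u) ≤ Real.sqrt (1-t) :=
          Real.sqrt_le_sqrt (by linarith [ht.2])
        have hsu : (0:ℝ) < Real.sqrt (1-u) := Real.sqrt_pos.2 (by linarith)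
        have hkey : (n+1) * cc (n+1) * t^n / Real.sqrt (1-t)
            ≤ (((n:ℝ)+1) * t^n) / Real.sqrt (1-u) := by
          have ht0 : (0:ℝ) ≤ t := ht.1.le
          have h' : cc (n+1) * t^n ≤ t^n :=
            mul_le_of_le_one_left (pow_nonneg ht0 n) (cc_le_one _)
          have hnum : ((n:ℝ)+1) * cc (n+1) * t^n ≤ ((n:ℝ)+1) * t^n := by
            rw [mul_assoc]
            exact mul_le_mul_of_nonneg_left h' (by positivity)
          exact div_le_div₀ (by positivity) hnum (by linarith) htu
        linarith
    have := hmono (Set.left_mem_Icc.2 h0) (Set.mem_Icc.2 ⟨h0, le_refl u⟩) h0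
    have hg0 : g 0 = 0 := by simp [hg, A_zero]
    rw [hg0] at this
    simpa [hg] using this

lemma R_bounds (n : ℕ) {u : ℝ} (h0 : 0 ≤ u) (h1 : u < 1) :
    0 ≤ 1/Real.sqrt (1-u) - S n u ∧ 1/Real.sqrt (1-u) - S n u ≤ u^(n+1)/(1-u) := by
  have hpos : (0:ℝ) < 1-u := by linarith
  have hs : (0:ℝ) < Real.sqrt (1-u) := Real.sqrt_pos.2 hpos
  obtain ⟨hA0, hA1⟩ := A_bounds n h0 h1
  have hrw : 1/Real.sqrt (1-u) - S n u = A n u / Real.sqrt (1-u) := by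
    rw [A]; field_simp
  rw [hrw]
  constructor
  · positivity
  · have h2 : A n u * Real.sqrt (1-u) ≤ u^(n+1) := (le_div_iff₀ hs).1 hA1
    rw [div_le_div_iff₀ hs hpos]
    nlinarith [h2, Real.sqrt_nonneg (1-u), Real.mul_self_sqrt hpos.le]

/-- truncated Taylor series of arcsin -/
noncomputable def P (n : ℕ) (x : ℝ) : ℝ := ∑ k ∈ range (n+1), cc k / (2*k+1) * x^(2*k+1)

lemma P_cont (n : ℕ) : Continuous (P n) :=
  continuous_finset_sum _ fun k _ => continuous_const.mul (continuous_pow _)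

lemma P_zero (n : ℕ) : P n 0 = 0 := by
  rw [P]; apply Finset.sum_eq_zero; intro k _; simp

lemma P_odd (n : ℕ) (x : ℝ) : P n (-x) = - P n x := by
  rw [P, P, ← Finset.sum_neg_distrib]
  apply Finset.sum_congr rfl
  intro k _
  rw [Odd.neg_pow ⟨k, by ring⟩]
  ring

lemma hasDerivAt_P (n : ℕ) (x : ℝ) : HasDerivAt (P n) (S n (x^2)) x := by
  have h : HasDerivAt (fun x : ℝ => ∑ k ∈ range (n+1), cc k / (2*k+1) * x^(2*k+1))
      (∑ k ∈ range (n+1), cc k / (2*k+1) * (((2*k+1 : ℕ) : ℝ) * x^(2*k))) x := by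
    apply HasDerivAt.fun_sum
    intro k _
    have := (hasDerivAt_pow (2*k+1) x).const_mul (cc k / (2*k+1))
    simpa using this
  have he : (∑ k ∈ range (n+1), cc k / (2*k+1) * (((2*k+1 : ℕ) : ℝ) * x^(2*k)))
      = S n (x^2) := by
    rw [S]
    apply Finset.sum_congr rfl
    intro k _
    have h21 : ((2*k+1 : ℕ) : ℝ) ≠ 0 := by positivity
    rw [pow_mul]
    push_cast
    field_simp
  rw [he] at h
  exact h

noncomputable def D (n : ℕ) (x : ℝ) : ℝ := Real.arcsin x - P n x

lemma hasDerivAt_D (n : ℕ) {x : ℝ} (h1 : -1 < x) (h2 : x < 1) :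
    HasDerivAt (D n) (1 / Real.sqrt (1 - x^2) - S n (x^2)) x :=
  (Real.hasDerivAt_arcsin (ne_of_gt h1) (ne_of_lt h2)).sub (hasDerivAt_P n x)

lemma D_bounds (n : ℕ) {a x : ℝ} (ha0 : 0 ≤ a) (ha1 : a < 1) (hx0 : 0 ≤ x) (hxa : x ≤ a) :
    0 ≤ D n x ∧ D n x ≤ a^(2*n+2) / (1 - a^2) * x := by
  have hx1 : x < 1 := lt_of_le_of_lt hxa ha1
  have ha2 : a^2 < 1 := by nlinarith
  have hDcont : Continuous (D n) := Real.continuous_arcsin.sub (P_cont n)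
  have hlt : ∀ t ∈ Set.Ioo (0:ℝ) x, -1 < t ∧ t < 1 := by
    intro t ht
    exact ⟨by linarith [ht.1], by linarith [ht.2]⟩
  have hderiv_bounds : ∀ t : ℝ, 0 ≤ t → t ≤ a →
      0 ≤ 1 / Real.sqrt (1 - t^2) - S n (t^2) ∧
      1 / Real.sqrt (1 - t^2) - S n (t^2) ≤ a^(2*n+2) / (1 - a^2) := by
    intro t ht0 hta
    have ht2 : t^2 < 1 := by nlinarith
    have ht2' : (0:ℝ) ≤ t^2 := sq_nonneg t
    obtain ⟨hr0, hr1⟩ := R_bounds n ht2' ht2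
    refine ⟨hr0, hr1.trans ?_⟩
    have h1 : (t^2)^(n+1) ≤ a^(2*n+2) := by
      have : (t^2)^(n+1) ≤ (a^2)^(n+1) :=
        pow_le_pow_left₀ (sq_nonneg t) (by nlinarith) (n+1)
      calc (t^2)^(n+1) ≤ (a^2)^(n+1) := this
        _ = a^(2*n+2) := by rw [← pow_mul]; ring_nf
    have h2 : (1:ℝ) - a^2 ≤ 1 - t^2 := by nlinarith
    have hpos : (0:ℝ) < 1 - a^2 := by linarith
    exact div_le_div₀ (by positivity) h1 hpos h2
  -- now the monotone arguments
  rcases eq_or_lt_of_le hx0 with rfl | hx0'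
  · constructor
    · simp [D, P_zero, Real.arcsin_zero]
    · simp [D, P_zero, Real.arcsin_zero]
  · have hint : interior (Set.Icc (0:ℝ) x) = Set.Ioo 0 x := interior_Icc
    constructor
    · have hmono : MonotoneOn (D n) (Set.Icc 0 x) := by
        apply monotoneOn_of_deriv_nonneg (convex_Icc 0 x) hDcont.continuousOn
        · intro t ht
          rw [hint] at ht
          obtain ⟨l1, l2⟩ := hlt t ht
          exact (hasDerivAt_D n l1 l2).differentiableAt.differentiableWithinAt
        · intro t ht
          rw [hint] at ht
          obtain ⟨l1, l2⟩ := hlt t ht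
          rw [(hasDerivAt_D n l1 l2).deriv]
          exact (hderiv_bounds t ht.1.le (le_trans ht.2.le hxa)).1
      have := hmono (Set.left_mem_Icc.2 hx0) (Set.mem_Icc.2 ⟨hx0, le_refl x⟩) hx0
      simpa [D, P_zero, Real.arcsin_zero] using this
    · set M : ℝ := a^(2*n+2) / (1 - a^2) with hM
      set g : ℝ → ℝ := fun t => M * t - D n t with hg
      have hgcont : Continuous g := (continuous_const.mul continuous_id).sub hDcont
      have hmono : MonotoneOn g (Set.Icc 0 x) := by
        apply monotoneOn_of_deriv_nonneg (convex_Icc 0 x) hgcont.continuousOn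
        · intro t ht
          rw [hint] at ht
          obtain ⟨l1, l2⟩ := hlt t ht
          exact (((hasDerivAt_id t).const_mul M).sub
            (hasDerivAt_D n l1 l2)).differentiableAt.differentiableWithinAt
        · intro t ht
          rw [hint] at ht
          obtain ⟨l1, l2⟩ := hlt t ht
          have hd : HasDerivAt g (M * 1 - (1 / Real.sqrt (1 - t^2) - S n (t^2))) t := by
            simpa [hg] using ((hasDerivAt_id t).const_mul M).fun_sub (hasDerivAt_D n l1 l2)
          rw [hd.deriv]
          have := (hderiv_bounds t ht.1.le (le_trans ht.2.le hxa)).2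
          linarith
      have := hmono (Set.left_mem_Icc.2 hx0) (Set.mem_Icc.2 ⟨hx0, le_refl x⟩) hx0
      have hg0 : g 0 = 0 := by simp [hg, D, P_zero, Real.arcsin_zero]
      rw [hg0] at this
      simp only [hg] at this
      linarith

lemma P_le_arcsin (n : ℕ) {x : ℝ} (h0 : 0 ≤ x) (h1 : x < 1) : P n x ≤ Real.arcsin x := by
  have := (D_bounds n h0 h1 h0 (le_refl x)).1
  rw [D] at this
  linarith

lemma P_one_le (n : ℕ) : P n 1 ≤ π/2 := by
  have htend : Filter.Tendsto (P n) (nhdsWithin 1 (Set.Iio 1)) (nhds (P n 1)) :=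
    ((P_cont n).tendsto 1).mono_left nhdsWithin_le_nhds
  apply le_of_tendsto htend
  filter_upwards [Ico_mem_nhdsLT_of_mem (by norm_num : (1:ℝ) ∈ Set.Ioc 0 1)] with x hx
  exact (P_le_arcsin n hx.1 hx.2).trans (Real.arcsin_le_pi_div_two x)

lemma P_nonneg (n : ℕ) {x : ℝ} (h0 : 0 ≤ x) : 0 ≤ P n x := by
  rw [P]
  apply Finset.sum_nonneg
  intro k _
  have := cc_pos k
  positivity

lemma P_le_P_one (n : ℕ) {x : ℝ} (h0 : 0 ≤ x) (h1 : x ≤ 1) : P n x ≤ P n 1 := by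
  rw [P, P]
  apply Finset.sum_le_sum
  intro k _
  have h2 : x^(2*k+1) ≤ 1^(2*k+1) := pow_le_pow_left₀ h0 h1 _
  have := cc_pos k
  have hc : 0 ≤ cc k / (2*(k:ℝ)+1) := by positivity
  exact mul_le_mul_of_nonneg_left h2 hc

lemma P_abs (n : ℕ) {x : ℝ} (hx : x ∈ Set.Icc (-1:ℝ) 1) : |P n x| ≤ π/2 := by
  have key : ∀ y : ℝ, 0 ≤ y → y ≤ 1 → |P n y| ≤ π/2 := by
    intro y h0 h1
    rw [abs_of_nonneg (P_nonneg n h0)]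
    exact (P_le_P_one n h0 h1).trans (P_one_le n)
  rcases le_or_gt 0 x with h | h
  · exact key x h hx.2
  · have := key (-x) (by linarith) (by linarith [hx.1])
    rwa [P_odd, abs_neg] at this

lemma D_odd (n : ℕ) (x : ℝ) : D n (-x) = - D n x := by
  rw [D, D, Real.arcsin_neg, P_odd]; ring

/-- the approximating polynomial -/
noncomputable def q (n : ℕ) : Polynomial ℝ :=
  Polynomial.C (2/π) * ∑ k ∈ range (n+1), Polynomial.C (cc k / (2*k+1)) * Polynomial.X^(2*k+1)

lemma eval_q (n : ℕ) (x : ℝ) : (q n).eval x = (2/π) * P n x := by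
  simp [q, P, eval_finset_sum]

lemma natDegree_q (n : ℕ) : (q n).natDegree ≤ 2*n+1 := by
  refine (natDegree_C_mul_le _ _).trans ?_
  apply natDegree_sum_le_of_forall_le
  intro k hk
  refine (natDegree_C_mul_X_pow_le _ _).trans ?_
  have : k ≤ n := by simpa [Nat.lt_succ_iff] using hk
  omega

end ArcsinApprox

set_option maxHeartbeats 2000000 in
open ArcsinApprox in
/-- **Bounded polynomial approximation of arcsin** (Corollary 3.14): there is
an odd polynomial of degree `O((1/δ) log(1/(δε)))`, bounded by `1` on
`[-1, 1]` and `ε`-close to `(2/π) arcsin(x)` on `[-(1-δ), 1-δ]`. -/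
theorem arcsin_bounded_approx :
    ∃ C : ℝ, 1 ≤ C ∧
      ∀ δ ε : ℝ, 0 < δ → δ < 1 → 0 < ε → ε < 1 →
        ∃ p : Polynomial ℝ,
          (∀ x : ℝ, p.eval (-x) = -p.eval x) ∧
          (p.natDegree : ℝ) ≤ C * (1 / δ) * Real.log (1 / (δ * ε)) ∧
          (∀ x : ℝ, x ∈ Set.Icc (-1 : ℝ) 1 → |p.eval x| ≤ 1) ∧
          (∀ x : ℝ, x ∈ Set.Icc (-(1 - δ)) (1 - δ) →
            |p.eval x - (2 / π) * Real.arcsin x| ≤ ε) := by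
  have hπ := Real.pi_pos
  refine ⟨4, by norm_num, ?_⟩
  intro δ ε hδ0 hδ1 hε0 hε1
  set L := Real.log (1/(δ*ε)) with hL
  have hδεpos : 0 < δ*ε := mul_pos hδ0 hε0
  have hδε1 : δ*ε < 1 := by nlinarith
  have hLpos : 0 < L := Real.log_pos (one_lt_one_div hδεpos hδε1)
  have hLeq : L = - Real.log (δ*ε) := by rw [hL, one_div, Real.log_inv]
  by_cases hcase : (2/π) * Real.arcsin (1-δ) ≤ ε
  · -- the zero polynomial suffices
    refine ⟨0, by simp, ?_, by simp, ?_⟩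
    · simp only [natDegree_zero, Nat.cast_zero]
      positivity
    · intro x hx
      simp only [eval_zero, zero_sub, abs_neg, abs_mul]
      have h2π : |2/π| = 2/π := abs_of_pos (by positivity)
      have hax : |Real.arcsin x| ≤ Real.arcsin (1-δ) := by
        rw [abs_le]
        constructor
        · rw [← Real.arcsin_neg]
          exact Real.monotone_arcsin (by linarith [hx.1])
        · exact Real.monotone_arcsin hx.2
      rw [h2π]
      calc 2/π * |Real.arcsin x| ≤ 2/π * Real.arcsin (1-δ) := by
            exact mul_le_mul_of_nonneg_left hax (by positivity)
        _ ≤ ε := hcase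
  · -- main case : truncated Taylor series
    push_neg at hcase
    have hθ0 : 0 ≤ Real.arcsin (1-δ) := Real.arcsin_nonneg.2 (by linarith)
    have hθle : Real.arcsin (1-δ) ≤ π/2 := Real.arcsin_le_pi_div_two _
    have hsin : 2/π * Real.arcsin (1-δ) ≤ Real.sin (Real.arcsin (1-δ)) :=
      Real.mul_le_sin hθ0 hθle
    rw [Real.sin_arcsin (by linarith) (by linarith)] at hsin
    have hεδ : ε < 1 - δ := lt_of_lt_of_le hcase hsin
    have hδε4 : δ*ε ≤ 1/4 := by nlinarith [sq_nonneg (2*δ-1), mul_lt_mul_of_pos_left hεδ hδ0]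
    have hL1 : 1 ≤ L := by
      rw [hLeq]
      have h4 : Real.log (δ*ε) ≤ Real.log (1/4) := Real.log_le_log hδεpos hδε4
      have : (1:ℝ) ≤ Real.log 4 := by
        rw [← Real.log_exp 1]
        apply Real.log_le_log (Real.exp_pos 1)
        linarith [Real.exp_one_lt_d9]
      have h14 : Real.log (1/4 : ℝ) = - Real.log 4 := by
        rw [one_div, Real.log_inv]
      linarith
    set n := ⌈L/(2*δ)⌉₊ with hn
    have hn_ge : L/(2*δ) ≤ (n:ℝ) := Nat.le_ceil _
    have hn_le : (n:ℝ) < L/(2*δ) + 1 := Nat.ceil_lt_add_one (div_nonneg hLpos.le (by positivity))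
    set a := 1 - δ with ha
    have ha0 : (0:ℝ) ≤ a := by rw [ha]; linarith
    have ha1 : a < 1 := by rw [ha]; linarith
    have hapos : 0 < a := by rw [ha]; linarith
    -- accuracy estimate
    have hacc : a^(2*n+2) ≤ δ*ε := by
      have hloga : Real.log a ≤ -δ := by
        have h1 : a ≤ Real.exp (-δ) := by
          have := Real.add_one_le_exp (-δ)
          rw [ha]; linarith
        have := Real.log_le_log hapos h1
        rwa [Real.log_exp] at this
      have hLle : L ≤ (2*(n:ℝ)+2)*δ := by
        rw [div_le_iff₀ (by positivity)] at hn_ge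
        nlinarith
      have hlogpow : Real.log (a^(2*n+2)) ≤ Real.log (δ*ε) := by
        rw [Real.log_pow]
        push_cast
        have h2 : (2*(n:ℝ)+2) * Real.log a ≤ (2*(n:ℝ)+2) * (-δ) :=
          mul_le_mul_of_nonneg_left hloga (by positivity)
        have h3 : (2*(n:ℝ)+2) * (-δ) ≤ -L := by nlinarith
        rw [hLeq] at h3
        linarith
      exact (Real.log_le_log_iff (pow_pos hapos _) hδεpos).1 hlogpow
    refine ⟨q n, ?_, ?_, ?_, ?_⟩
    · intro x
      rw [eval_q, eval_q, P_odd]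
      ring
    · -- degree bound
      have hdeg : ((q n).natDegree : ℝ) ≤ 2*(n:ℝ)+1 := by
        have h := natDegree_q n
        have h2 : ((q n).natDegree : ℝ) ≤ ((2*n+1 : ℕ) : ℝ) := Nat.cast_le.2 h
        push_cast at h2
        linarith
      have h1δ : 1 ≤ 1/δ := by rw [le_div_iff₀ hδ0]; linarith
      have hstep : 2*(n:ℝ)+1 ≤ 4 * (1/δ) * L := by
        have e1 : L/(2*δ) = L * (1/δ) / 2 := by ring
        rw [e1] at hn_le
        have hLB : 0 ≤ L * (1/δ - 1) := mul_nonneg hLpos.le (by linarith)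
        have e2 : L * (1/δ - 1) = L * (1/δ) - L := by ring
        rw [e2] at hLB
        have e3 : 4 * (1/δ) * L = 4 * (L * (1/δ)) := by ring
        rw [e3]
        linarith
      linarith
    · -- boundedness
      intro x hx
      rw [eval_q, abs_mul, abs_of_pos (by positivity : (0:ℝ) < 2/π)]
      have := P_abs n hx
      calc 2/π * |P n x| ≤ 2/π * (π/2) := mul_le_mul_of_nonneg_left this (by positivity)
        _ = 1 := by field_simp
    · -- accuracy
      intro x hx
      have hxa : |x| ≤ a := by
        rw [abs_le]
        exact ⟨by linarith [hx.1], hx.2⟩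
      obtain ⟨hd0, hd1⟩ := D_bounds n ha0 ha1 (abs_nonneg x) hxa
      have ha2 : δ ≤ 1 - a^2 := by rw [ha]; nlinarith
      have ha2pos : 0 < 1 - a^2 := by nlinarith
      have hDabs : |D n (|x|)| ≤ ε := by
        rw [abs_of_nonneg hd0]
        have hM : a^(2*n+2)/(1-a^2) * |x| ≤ a^(2*n+2)/δ * 1 := by
          apply mul_le_mul
          · exact div_le_div_of_nonneg_left (pow_nonneg ha0 _) hδ0 ha2
          · linarith [ha1, hxa]
          · exact abs_nonneg x
          · exact div_nonneg (pow_nonneg ha0 _) hδ0.le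
        have hfin : a^(2*n+2)/δ ≤ ε := by
          rw [div_le_iff₀ hδ0]
          nlinarith
        calc D n (|x|) ≤ a^(2*n+2)/(1-a^2) * |x| := hd1
          _ ≤ a^(2*n+2)/δ * 1 := hM
          _ ≤ ε := by linarith
      have hDx : |D n x| ≤ ε := by
        rcases le_or_gt 0 x with h | h
        · rwa [abs_of_nonneg h] at hDabs
        · rw [abs_of_neg h] at hDabs
          rwa [D_odd, abs_neg] at hDabs
      rw [eval_q, ← mul_sub, abs_mul, abs_of_pos (by positivity : (0:ℝ) < 2/π)]
      have hswap : |P n x - Real.arcsin x| = |D n x| := by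
        rw [abs_sub_comm, D]
      rw [hswap]
      have h2π1 : 2/π ≤ 1 := by
        rw [div_le_one hπ]
        linarith [Real.two_le_pi]
      nlinarith [abs_nonneg (D n x)]
end

section
/- Let Δ ∈ (0, 1], let S ⊆ [−Δ, Δ] be a set of reals, let f : ℝ → ℝ, let ε > 0, and let p ∈ ℝ[X] be a polynomial such that |p(x) − f(x)| ≤ ε for all x ∈ S and |p(x)| ≤ 1 for all x ∈ [−1, 1]. Then for all x, y ∈ S with x ≠ y, the degree of p satisfies deg p ≥ √(1 − Δ²) · (|f(x) − f(y)| − 2ε) / |x − y|. -/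
open Real Polynomial Finset

namespace BApx
noncomputable section
open Complex

def tnode (n k : ℕ) : ℝ := (2*k+1) * π / (2*n)
def wnode (n k : ℕ) : ℂ := Complex.exp (tnode n k * I)
def mu (n k : ℕ) : ℝ := (-1)^k / (4*n*(Real.sin (tnode n k / 2))^2)
def Ssum (n j : ℕ) : ℂ := ∑ k ∈ range (2*n), (wnode n k)^j / (wnode n k - 1)^2

variable {n : ℕ} (hn : 1 ≤ n)

lemma wnode_ne_zero (k : ℕ) : wnode n k ≠ 0 := Complex.exp_ne_zero _

include hn in
lemma wnode_pow_two_n (k : ℕ) : (wnode n k)^(2*n) = -1 := by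
  have hn' : (n:ℂ) ≠ 0 := Nat.cast_ne_zero.mpr (by omega)
  rw [wnode, ← Complex.exp_nat_mul]
  have : ((2*n : ℕ):ℂ) * (↑(tnode n k) * I) = ((2*k+1 : ℕ):ℂ) * (π * I) := by
    rw [tnode]; push_cast; field_simp
  rw [this, Complex.exp_nat_mul, Complex.exp_pi_mul_I]
  rw [pow_succ, pow_mul]
  norm_num

include hn in
lemma wnode_ne_one (k : ℕ) : wnode n k ≠ 1 := by
  intro h
  have := wnode_pow_two_n hn k
  rw [h, one_pow] at this
  norm_num at this

include hn in
lemma wnode_pow_n (k : ℕ) : (wnode n k)^n = I * (-1)^k := by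
  have hn' : (n:ℂ) ≠ 0 := Nat.cast_ne_zero.mpr (by omega)
  rw [wnode, ← Complex.exp_nat_mul]
  have h1 : (n:ℂ) * (↑(tnode n k) * I) = ((π/2 : ℝ):ℂ) * I + (k:ℕ) * (π * I) := by
    rw [tnode]; push_cast; field_simp; ring
  rw [h1, Complex.exp_add, Complex.exp_nat_mul, Complex.exp_pi_mul_I]
  rw [Complex.exp_mul_I, ← Complex.ofReal_cos, ← Complex.ofReal_sin]
  simp [Real.cos_pi_div_two, Real.sin_pi_div_two]

include hn in
lemma wnode_reflect (k : ℕ) (hk : k < 2*n) :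
    wnode n (2*n-1-k) * wnode n k = 1 := by
  have hn' : (n:ℂ) ≠ 0 := Nat.cast_ne_zero.mpr (by omega)
  rw [wnode, wnode, ← Complex.exp_add]
  have : (↑(tnode n (2*n-1-k)) * I + ↑(tnode n k) * I) = ((1:ℤ):ℂ) * (2 * π * I) := by
    rw [tnode, tnode]
    have hc : ((2*n-1-k : ℕ) : ℝ) = 2*(n:ℝ) - 1 - k := by
      push_cast [Nat.cast_sub (by omega : 1+k ≤ 2*n), Nat.sub_sub]; ring
    rw [hc]; push_cast; field_simp; ring
  rw [this]
  exact Complex.exp_int_mul_two_pi_mul_I 1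

include hn in
lemma sum_wnode_pow (s : ℕ) (hs1 : 1 ≤ s) (hs2 : s < 2*n) :
    ∑ k ∈ range (2*n), (wnode n k)^s = 0 := by
  have hn' : (n:ℝ) ≠ 0 := Nat.cast_ne_zero.mpr (by omega)
  have hw : ∀ k, (wnode n k)^s =
      Complex.exp (((s*π/(2*n) : ℝ):ℂ) * I) * (Complex.exp (((s*π/n : ℝ):ℂ) * I))^k := by
    intro k
    rw [wnode, ← Complex.exp_nat_mul, ← Complex.exp_nat_mul, ← Complex.exp_add]
    congr 1
    rw [tnode]; push_cast; field_simp; ring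
  simp only [hw]
  rw [← Finset.mul_sum]
  have hq : Complex.exp (((s*π/n : ℝ):ℂ) * I) ≠ 1 := by
    intro h
    rw [Complex.exp_eq_one_iff] at h
    obtain ⟨m, hm⟩ := h
    have h2 : ((s*π/n : ℝ):ℂ) = (((m:ℝ) * (2*π) : ℝ):ℂ) := by
      apply mul_right_cancel₀ Complex.I_ne_zero
      rw [hm]; push_cast; ring
    have h3 : (s:ℝ)*π/n = m * (2*π) := Complex.ofReal_injective h2
    have h4 : (s:ℝ) = (m:ℝ) * (2*n) := by
      field_simp at h3
      nlinarith [Real.pi_pos]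
    have h5 : (s:ℤ) = m * (2*n) := by exact_mod_cast h4
    rcases le_or_gt m 0 with hm0 | hm0
    · nlinarith [hm0, h5]
    · nlinarith [hm0, h5]
  rw [geom_sum_eq hq]
  have : (Complex.exp (((s*π/n : ℝ):ℂ) * I))^(2*n) = 1 := by
    rw [← Complex.exp_nat_mul]
    have : ((2*n : ℕ):ℂ) * (((s*π/n : ℝ):ℂ) * I) = ((s:ℤ):ℂ) * (2*π*I) := by
      push_cast
      have hn'' : (n:ℂ) ≠ 0 := Nat.cast_ne_zero.mpr (by omega)
      field_simp
    rw [this]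
    exact Complex.exp_int_mul_two_pi_mul_I s
  rw [this]
  simp

include hn in
lemma sin_node_pos (k : ℕ) (hk : k < 2*n) : 0 < Real.sin (tnode n k / 2) := by
  have hn' : (0:ℝ) < n := by exact_mod_cast Nat.pos_of_ne_zero (by omega)
  have hkr : (2*(k:ℝ)+1) < 4*n := by exact_mod_cast (by omega : 2*k+1 < 4*n)
  apply Real.sin_pos_of_pos_of_lt_pi
  · rw [tnode]; positivity
  · rw [tnode]
    rw [div_div, div_lt_iff₀ (by positivity)]
    nlinarith [Real.pi_pos]

lemma wnode_sub_one_sq (k : ℕ) :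
    (wnode n k - 1)^2 = -4 * ((Real.sin (tnode n k / 2) : ℝ):ℂ)^2 * wnode n k := by
  set z : ℂ := ((tnode n k / 2 : ℝ) : ℂ) with hz
  have he : wnode n k = Complex.exp (z*I) * Complex.exp (z*I) := by
    rw [wnode, ← Complex.exp_add]; congr 1
    rw [hz]; push_cast; ring
  have hef : Complex.exp (z*I) * Complex.exp (-(z*I)) = 1 := by
    rw [← Complex.exp_add]; simp
  have h1 : Complex.exp (z*I) = Complex.cos z + Complex.sin z * I := Complex.exp_mul_I z
  have h2 : Complex.exp (-(z*I)) = Complex.cos z - Complex.sin z * I := by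
    rw [show -(z*I) = -z*I by ring, Complex.exp_mul_I, Complex.cos_neg, Complex.sin_neg]; ring
  have hdiff : Complex.exp (z*I) - Complex.exp (-(z*I)) = 2 * Complex.sin z * I := by
    rw [h1, h2]; ring
  have hs : Complex.sin z = ((Real.sin (tnode n k / 2) : ℝ):ℂ) := by
    rw [hz, Complex.ofReal_sin]
  have key : (Complex.exp (z*I) * Complex.exp (z*I) - 1)^2
      = (Complex.exp (z*I))^2 * (Complex.exp (z*I) - Complex.exp (-(z*I)))^2 := by
    linear_combination (2*(Complex.exp (z*I))^2 - Complex.exp (z*I) * Complex.exp (-(z*I)) - 1) * hef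
  rw [he, key, hdiff, hs]
  have : ((2:ℂ) * ((Real.sin (tnode n k / 2) : ℝ):ℂ) * I)^2
      = -4 * ((Real.sin (tnode n k / 2) : ℝ):ℂ)^2 := by
    rw [mul_pow, mul_pow, Complex.I_sq]; ring
  rw [this]; ring


include hn in
lemma mu_mul (k : ℕ) (hk : k < 2*n) :
    (mu n k : ℂ) * ((n:ℂ) * (wnode n k - 1)^2) = I * (wnode n k)^(n+1) := by
  have hs := sin_node_pos hn k hk
  set s : ℝ := Real.sin (tnode n k / 2) with hsdef
  have hs' : (s:ℂ) ≠ 0 := Complex.ofReal_ne_zero.mpr (ne_of_gt hs)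
  have hw2 : (wnode n k - 1)^2 = -4 * (s:ℂ)^2 * wnode n k := wnode_sub_one_sq k
  have hmu : (mu n k : ℂ) = ((-1):ℂ)^k / (4*(n:ℂ)*(s:ℂ)^2) := by
    rw [mu, ← hsdef]; push_cast; ring
  clear_value s
  have hn' : (n:ℂ) ≠ 0 := Nat.cast_ne_zero.mpr (by omega)
  rw [hw2, hmu,
    show (wnode n k)^(n+1) = (wnode n k)^n * wnode n k from pow_succ _ _,
    wnode_pow_n hn]
  have hi := Complex.I_sq
  field_simp
  linear_combination (-wnode n k) * hi

include hn in
lemma Ssum_step (j : ℕ) (hj1 : 1 ≤ j) (hj2 : j ≤ 2*n - 1) :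
    Ssum n (j+2) + Ssum n j = 2 * Ssum n (j+1) := by
  have h : ∀ k ∈ range (2*n),
      (wnode n k)^(j+2) / (wnode n k - 1)^2 + (wnode n k)^j / (wnode n k - 1)^2
      = 2 * ((wnode n k)^(j+1) / (wnode n k - 1)^2) + (wnode n k)^j := by
    intro k _
    have hw1 : wnode n k - 1 ≠ 0 := sub_ne_zero.mpr (wnode_ne_one hn k)
    field_simp
    ring
  rw [Ssum, Ssum, Ssum, ← Finset.sum_add_distrib, Finset.sum_congr rfl h,
    Finset.sum_add_distrib, Finset.mul_sum, sum_wnode_pow hn j hj1 (by omega)]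
  simp [Finset.mul_sum]

include hn in
lemma Ssum_diff (j : ℕ) (hj1 : 1 ≤ j) (hj2 : j ≤ 2*n) :
    Ssum n (j+1) - Ssum n j = Ssum n 2 - Ssum n 1 := by
  induction j with
  | zero => omega
  | succ m ih =>
    rcases Nat.eq_or_lt_of_le hj1 with h1 | h1
    · simp [← h1]
    · have hm1 : 1 ≤ m := by omega
      have hm2 : m ≤ 2*n - 1 := by omega
      have hstep := Ssum_step hn m hm1 hm2
      have := ih hm1 (by omega)
      have : Ssum n (m+2) - Ssum n (m+1) = Ssum n (m+1) - Ssum n m := by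
        linear_combination hstep
      rw [this]
      exact ih hm1 (by omega)

include hn in
lemma Ssum_ap (j : ℕ) (hj1 : 1 ≤ j) (hj2 : j ≤ 2*n+1) :
    Ssum n j = Ssum n 1 + ((j:ℂ) - 1) * (Ssum n 2 - Ssum n 1) := by
  induction j with
  | zero => omega
  | succ m ih =>
    rcases Nat.eq_or_lt_of_le hj1 with h1 | h1
    · rw [← h1]; push_cast; ring
    · have hm1 : 1 ≤ m := by omega
      have hd := Ssum_diff hn m hm1 (by omega)
      have him := ih hm1 (by omega)
      have : Ssum n (m+1) = Ssum n m + (Ssum n 2 - Ssum n 1) := by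
        linear_combination hd
      rw [this, him]
      push_cast; ring

include hn in
lemma sum_div_eq (hd : True) : ∑ k ∈ range (2*n), wnode n k / (wnode n k - 1) = n := by
  set f : ℕ → ℂ := fun k => wnode n k / (wnode n k - 1) with hf
  have hpair : ∀ k ∈ range (2*n), f (2*n-1-k) + f k = 1 := by
    intro k hk
    rw [Finset.mem_range] at hk
    have hvw := wnode_reflect hn k hk
    set w := wnode n k
    set v := wnode n (2*n-1-k)
    have hw1 : w - 1 ≠ 0 := sub_ne_zero.mpr (wnode_ne_one hn k)
    have hv1 : v - 1 ≠ 0 := sub_ne_zero.mpr (wnode_ne_one hn _)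
    rw [hf]
    show v / (v - 1) + w / (w - 1) = 1
    rw [div_add_div _ _ hv1 hw1, div_eq_one_iff_eq (mul_ne_zero hv1 hw1)]
    linear_combination hvw
  have h2 : (∑ k ∈ range (2*n), f k) + (∑ k ∈ range (2*n), f k) = 2*n := by
    nth_rewrite 1 [← Finset.sum_range_reflect]
    rw [← Finset.sum_add_distrib, Finset.sum_congr rfl hpair]
    simp
  have := h2
  push_cast at this ⊢
  linear_combination this / 2

include hn in
lemma Ssum_d : Ssum n 2 - Ssum n 1 = n := by
  have h : ∀ k ∈ range (2*n),
      (wnode n k)^2 / (wnode n k - 1)^2 - (wnode n k)^1 / (wnode n k - 1)^2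
        = wnode n k / (wnode n k - 1) := by
    intro k _
    have hw1 : wnode n k - 1 ≠ 0 := sub_ne_zero.mpr (wnode_ne_one hn k)
    field_simp
  rw [Ssum, Ssum, ← Finset.sum_sub_distrib, Finset.sum_congr rfl h, sum_div_eq hn trivial]

include hn in
lemma Ssum_mid : Ssum n (n+1) = 0 := by
  set g : ℕ → ℂ := fun k => (wnode n k)^(n+1) / (wnode n k - 1)^2 with hg
  have hpair : ∀ k ∈ range (2*n), g (2*n-1-k) + g k = 0 := by
    intro k hk
    rw [Finset.mem_range] at hk
    have hvw := wnode_reflect hn k hk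
    have h2 := wnode_pow_two_n hn k
    set w := wnode n k
    set v := wnode n (2*n-1-k)
    have hw1 : w - 1 ≠ 0 := sub_ne_zero.mpr (wnode_ne_one hn k)
    have hv1 : v - 1 ≠ 0 := sub_ne_zero.mpr (wnode_ne_one hn _)
    have hw0 : w ≠ 0 := wnode_ne_zero k
    have e1 : v^(n+1)*w^(n+1) = 1 := by rw [← mul_pow, hvw, one_pow]
    have e2 : w^(n+1)*w^(n+1) = -(w^2) := by
      rw [← pow_add, show (n+1)+(n+1) = 2*n+2 from by ring, pow_add, h2]; ring
    have h3 : (v-1)*w = 1-w := by linear_combination hvw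
    have h4 : (v^(n+1) * (w-1)^2 + w^(n+1) * (v-1)^2) * w^(n+1) = 0 := by
      linear_combination (w-1)^2*e1 + (v-1)^2*e2 - ((v-1)*w + (1-w))*h3
    have h5 : v^(n+1) * (w-1)^2 + w^(n+1) * (v-1)^2 = 0 := by
      rcases mul_eq_zero.mp h4 with h | h
      · exact h
      · exact absurd h (pow_ne_zero _ hw0)
    rw [hg]
    simp only
    rw [div_add_div _ _ (pow_ne_zero 2 hv1) (pow_ne_zero 2 hw1), _root_.div_eq_zero_iff]
    left
    linear_combination h5
  have h2 : (∑ k ∈ range (2*n), g k) + (∑ k ∈ range (2*n), g k) = 0 := by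
    nth_rewrite 1 [← Finset.sum_range_reflect]
    rw [← Finset.sum_add_distrib, Finset.sum_congr rfl hpair]
    simp
  have : Ssum n (n+1) = ∑ k ∈ range (2*n), g k := rfl
  rw [this]
  linear_combination h2 / 2

include hn in
lemma Ssum_eq (j : ℕ) (hj1 : 1 ≤ j) (hj2 : j ≤ 2*n+1) :
    Ssum n j = (n:ℂ) * ((j:ℂ) - 1 - n) := by
  have hd := Ssum_d hn
  have hmid := Ssum_mid hn
  have hap1 := Ssum_ap hn (n+1) (by omega) (by omega)
  rw [hmid, hd] at hap1
  have hS1 : Ssum n 1 = -(n:ℂ)*n := by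
    push_cast at hap1
    linear_combination -hap1
  have hap := Ssum_ap hn j hj1 hj2
  rw [hd, hS1] at hap
  rw [hap]; ring

include hn in
lemma sumA (m : ℤ) (hm1 : -(n:ℤ) ≤ m) (hm2 : m ≤ n) :
    ∑ k ∈ range (2*n), (mu n k : ℂ) * (wnode n k)^m = I * m := by
  have hn' : (n:ℂ) ≠ 0 := Nat.cast_ne_zero.mpr (by omega)
  set j := (m + n + 1).toNat with hjdef
  have hj : ((j:ℕ) : ℤ) = m + n + 1 := Int.toNat_of_nonneg (by omega)
  have hterm : ∀ k ∈ range (2*n),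
      (mu n k : ℂ) * (wnode n k)^m = (I/(n:ℂ)) * ((wnode n k)^j/(wnode n k - 1)^2) := by
    intro k hk
    rw [Finset.mem_range] at hk
    have hmm := mu_mul hn k hk
    have hw0 : wnode n k ≠ 0 := wnode_ne_zero k
    have hw1 : wnode n k - 1 ≠ 0 := sub_ne_zero.mpr (wnode_ne_one hn k)
    have hmu' : (mu n k : ℂ) = I * (wnode n k)^(n+1) / ((n:ℂ)*(wnode n k - 1)^2) := by
      rw [eq_div_iff (by exact mul_ne_zero hn' (pow_ne_zero 2 hw1))]
      linear_combination hmm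
    have hpow : (wnode n k)^(n+1) * (wnode n k)^m = (wnode n k)^j := by
      rw [← zpow_natCast (wnode n k) (n+1), ← zpow_natCast (wnode n k) j, ← zpow_add₀ hw0]
      congr 1
      push_cast
      omega
    rw [hmu', div_mul_eq_mul_div, mul_assoc, hpow]
    field_simp
  rw [Finset.sum_congr rfl hterm, ← Finset.mul_sum, ← Ssum,
    Ssum_eq hn j (by omega) (by omega)]
  have hjc : ((j:ℕ):ℂ) = (m:ℂ) + n + 1 := by exact_mod_cast congrArg (Int.cast : ℤ → ℂ) hj
  rw [hjc]
  field_simp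
  ring

include hn in
lemma abs_mu_eq (k : ℕ) (hk : k < 2*n) : |mu n k| = (-1:ℝ)^k * mu n k := by
  have hs := sin_node_pos hn k hk
  have hn' : (0:ℝ) < n := by exact_mod_cast Nat.pos_of_ne_zero (by omega)
  have hc : (0:ℝ) < 1 / (4*n*(Real.sin (tnode n k / 2))^2) := by positivity
  rcases Nat.even_or_odd k with he | ho
  · rw [he.neg_one_pow, one_mul, mu, he.neg_one_pow]
    rw [abs_of_pos (by simpa using hc)]
  · rw [ho.neg_one_pow, mu, ho.neg_one_pow]
    rw [abs_of_neg (by simp only [neg_div]; linarith [hc])]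
    ring

include hn in
lemma sum_abs_mu : ∑ k ∈ range (2*n), |mu n k| = n := by
  have hA := sumA hn n (by omega) le_rfl
  have h1 : ∀ k ∈ range (2*n),
      (mu n k : ℂ) * (wnode n k)^(n:ℤ) = I * (((-1:ℝ)^k * mu n k : ℝ) : ℂ) := by
    intro k hk
    rw [zpow_natCast, wnode_pow_n hn]
    push_cast
    ring
  rw [Finset.sum_congr rfl h1, ← Finset.mul_sum] at hA
  have h2 : (∑ k ∈ range (2*n), (((-1:ℝ)^k * mu n k : ℝ):ℂ)) = ((n:ℝ):ℂ) := by
    have hI : (I:ℂ) ≠ 0 := Complex.I_ne_zero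
    field_simp at hA
    exact_mod_cast hA
  have h3 : ∑ k ∈ range (2*n), ((-1:ℝ)^k * mu n k) = n := by
    exact_mod_cast (Complex.ofReal_injective (by push_cast; exact_mod_cast h2))
  rw [← h3]
  apply Finset.sum_congr rfl
  intro k hk
  rw [Finset.mem_range] at hk
  exact abs_mu_eq hn k hk
lemma binom_pow (m : ℕ) (z : ℂ) : ∑ s ∈ range (m+1), (m.choose s : ℂ) * z^s = (1+z)^m := by
  rw [add_comm (1:ℂ) z, add_pow]
  apply Finset.sum_congr rfl
  intro s hs
  simp [mul_comm]

lemma binom_deriv (j : ℕ) (z : ℂ) :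
    ∑ r ∈ range (j+1), (j.choose r : ℂ) * r * z^r = j * z * (1+z)^(j-1) := by
  cases j with
  | zero => simp
  | succ jj =>
    rw [Finset.sum_range_succ']
    have h : ∀ s, ((jj+1).choose (s+1) : ℂ) * (s+1) = (jj+1) * (jj.choose s : ℂ) := by
      intro s
      have := Nat.add_one_mul_choose_eq jj s
      exact_mod_cast congrArg (Nat.cast : ℕ → ℂ) this.symm
    have h2 : ∀ s ∈ range (jj+1),
        ((jj+1).choose (s+1) : ℂ) * (s+1:ℕ) * z^(s+1)
          = ((jj:ℂ)+1) * z * ((jj.choose s : ℂ) * z^s) := by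
      intro s hs
      have := h s
      push_cast at this ⊢
      linear_combination z^(s+1) * this
    rw [Finset.sum_congr rfl h2, ← Finset.mul_sum, binom_pow]
    push_cast
    ring

lemma binom_central (j : ℕ) (hj : 1 ≤ j) (z : ℂ) :
    ∑ r ∈ range (j+1), (j.choose r : ℂ) * (2*(r:ℂ) - j) * z^r
      = (j:ℂ) * (z-1) * (1+z)^(j-1) := by
  have h1 := binom_deriv j z
  have h2 := binom_pow j z
  have h3 : ∀ r ∈ range (j+1), (j.choose r : ℂ) * (2*(r:ℂ) - j) * z^r
      = 2 * ((j.choose r : ℂ) * r * z^r) - (j:ℂ) * ((j.choose r:ℂ) * z^r) := by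
    intro r _; ring
  rw [Finset.sum_congr rfl h3, Finset.sum_sub_distrib, ← Finset.mul_sum, ← Finset.mul_sum,
    h1, h2]
  have : (1+z)^j = (1+z)^(j-1) * (1+z) := by
    rw [← pow_succ]
    congr 1
    omega
  rw [this]
  ring


lemma cos_formula (z : ℂ) :
    Complex.cos z = (Complex.exp (z*Complex.I) + Complex.exp (-(z*Complex.I)))/2 := by
  rw [Complex.exp_mul_I, show -(z*Complex.I) = (-z)*Complex.I from by ring,
    Complex.exp_mul_I, Complex.cos_neg, Complex.sin_neg]
  ring

include hn in
lemma sumM (j : ℕ) (hj : j ≤ n) (t : ℝ) :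
    ∑ k ∈ range (2*n), (mu n k : ℂ) * (Complex.cos ((t + tnode n k : ℝ) : ℂ))^j
      = -(j:ℂ) * Complex.sin (t:ℂ) * (Complex.cos (t:ℂ))^(j-1) := by
  rcases Nat.eq_zero_or_pos j with hj0 | hjpos
  · subst hj0
    simp only [pow_zero, mul_one, Nat.cast_zero, neg_zero, zero_mul]
    have hA := sumA hn 0 (by omega) (by omega)
    simpa using hA
  set u : ℂ := Complex.exp ((t:ℂ) * Complex.I) with hu
  have hu0 : u ≠ 0 := Complex.exp_ne_zero _
  have huinv : u * u⁻¹ = 1 := mul_inv_cancel₀ hu0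
  have h1 : ∀ k : ℕ, Complex.exp (((t + tnode n k : ℝ):ℂ) * I) = u * wnode n k := by
    intro k
    rw [hu, wnode, ← Complex.exp_add]; congr 1; push_cast; ring
  have hcos : ∀ k : ℕ, Complex.cos ((t + tnode n k : ℝ):ℂ)
      = (u * wnode n k + (u * wnode n k)⁻¹)/2 := by
    intro k
    rw [cos_formula, h1, Complex.exp_neg, h1]
  -- expansion of cosine power
  have hexp : ∀ k : ℕ, (Complex.cos ((t + tnode n k:ℝ):ℂ))^j * 2^j
      = ∑ r ∈ range (j+1), (j.choose r : ℂ) * (u*wnode n k)^(2*(r:ℤ) - j) := by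
    intro k
    have huw : u * wnode n k ≠ 0 := mul_ne_zero hu0 (wnode_ne_zero k)
    rw [hcos, div_pow, div_mul_cancel₀ _ (pow_ne_zero j (two_ne_zero (α := ℂ))), add_pow]
    apply Finset.sum_congr rfl
    intro r hr
    rw [Finset.mem_range] at hr
    rw [inv_pow, ← zpow_natCast (u*wnode n k) r, ← zpow_natCast (u*wnode n k) (j-r),
      ← zpow_neg, ← zpow_add₀ huw]
    have hcast : (r:ℤ) + -(((j-r : ℕ)):ℤ) = 2*(r:ℤ) - j := by
      have : ((j - r : ℕ) : ℤ) = (j:ℤ) - r := by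
        push_cast [Nat.cast_sub (by omega : r ≤ j)]; ring
      rw [this]; ring
    rw [hcast]; ring
  -- the key sum identity, multiplied by 2^j * u^j
  have hmain : (∑ k ∈ range (2*n), (mu n k : ℂ) * (Complex.cos ((t + tnode n k:ℝ):ℂ))^j)
      * (2^j * u^j)
      = Complex.I * ((j:ℂ) * (u^2-1) * (1+u^2)^(j-1)) := by
    have step1 : (∑ k ∈ range (2*n), (mu n k : ℂ) * (Complex.cos ((t + tnode n k:ℝ):ℂ))^j) * 2^j
        = ∑ r ∈ range (j+1), (j.choose r : ℂ)
            * ((Complex.I * (2*(r:ℤ) - j)) * u^(2*(r:ℤ) - j)) := by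
      rw [Finset.sum_mul]
      have : ∀ k ∈ range (2*n), (mu n k : ℂ) * Complex.cos ((t + tnode n k:ℝ):ℂ)^j * 2^j
          = ∑ r ∈ range (j+1), (j.choose r : ℂ) * u^(2*(r:ℤ)-j)
              * ((mu n k:ℂ) * (wnode n k)^(2*(r:ℤ)-j)) := by
        intro k _
        rw [mul_assoc, hexp k, Finset.mul_sum]
        apply Finset.sum_congr rfl
        intro r _
        rw [mul_zpow]
        ring
      rw [Finset.sum_congr rfl this, Finset.sum_comm]
      apply Finset.sum_congr rfl
      intro r hr
      rw [Finset.mem_range] at hr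
      rw [← Finset.mul_sum, sumA hn (2*(r:ℤ)-j) (by omega) (by omega)]
      push_cast
      ring
    calc (∑ k ∈ range (2*n), (mu n k : ℂ) * (Complex.cos ((t + tnode n k:ℝ):ℂ))^j) * (2^j * u^j)
        = ((∑ k ∈ range (2*n), (mu n k : ℂ) * (Complex.cos ((t + tnode n k:ℝ):ℂ))^j) * 2^j) * u^j := by
          ring
      _ = (∑ r ∈ range (j+1), (j.choose r : ℂ)
            * ((Complex.I * (2*(r:ℤ) - j)) * u^(2*(r:ℤ) - j))) * u^j := by rw [step1]
      _ = Complex.I * ∑ r ∈ range (j+1), (j.choose r : ℂ) * (2*(r:ℂ) - j) * (u^2)^r := by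
          rw [Finset.sum_mul, Finset.mul_sum]
          apply Finset.sum_congr rfl
          intro r hr
          rw [Finset.mem_range] at hr
          have : u^(2*(r:ℤ) - j) * u^(j:ℕ) = (u^2)^r := by
            rw [← zpow_natCast u j, ← zpow_add₀ hu0]
            have : 2*(r:ℤ) - j + j = 2*r := by ring
            rw [this, show (2*(r:ℤ)) = ((2*r : ℕ) : ℤ) from by push_cast; ring,
              zpow_natCast, pow_mul]
          push_cast
          linear_combination ((j.choose r : ℂ)) * Complex.I * (2*(r:ℂ) - j) * this
      _ = Complex.I * ((j:ℂ) * (u^2-1) * (1+u^2)^(j-1)) := by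
          rw [binom_central j hjpos (u^2)]
  -- RHS times the same factor
  have hinv : u⁻¹ = Complex.cos (t:ℂ) - Complex.sin (t:ℂ)*Complex.I := by
    rw [hu, ← Complex.exp_neg, show -((t:ℂ)*Complex.I) = (-(t:ℂ))*Complex.I from by ring,
      Complex.exp_mul_I, Complex.cos_neg, Complex.sin_neg]
    ring
  have hsin : 2 * Complex.sin (t:ℂ) * Complex.I = u - u⁻¹ := by
    rw [hinv, hu, Complex.exp_mul_I]; ring
  have hcos2 : 2 * Complex.cos (t:ℂ) = u + u⁻¹ := by
    rw [hinv, hu, Complex.exp_mul_I]; ring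
  -- RHS times the factor equals the same thing
  have h2cu : 2 * Complex.cos (t:ℂ) * u = u^2 + 1 := by
    linear_combination u * hcos2 + huinv
  have hCpow : (Complex.cos (t:ℂ))^(j-1) * (2*u)^(j-1) = (1 + u^2)^(j-1) := by
    rw [← mul_pow]
    congr 1
    linear_combination h2cu
  have hfac : -(Complex.sin (t:ℂ)) * (2*u) = Complex.I * (u^2 - 1) := by
    have hIs := Complex.I_sq
    linear_combination Complex.I * u * hsin + (-2 * Complex.sin (t:ℂ) * u) * hIs + (-Complex.I) * huinv
  have hrhs : (-(j:ℂ) * Complex.sin (t:ℂ) * (Complex.cos (t:ℂ))^(j-1)) * (2^j * u^j)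
      = Complex.I * ((j:ℂ) * (u^2-1) * (1+u^2)^(j-1)) := by
    obtain ⟨jj, rfl⟩ : ∃ jj, j = jj + 1 := ⟨j - 1, by omega⟩
    have e1 : (2:ℂ)^(jj+1) * u^(jj+1) = (2*u) * (2*u)^jj := by
      rw [← mul_pow, pow_succ]; ring
    simp only [Nat.add_sub_cancel] at hCpow ⊢
    push_cast
    calc (-(jj+1:ℂ) * Complex.sin (t:ℂ) * (Complex.cos (t:ℂ))^jj) * ((2:ℂ)^(jj+1) * u^(jj+1))
        = (jj+1:ℂ) * ((-(Complex.sin (t:ℂ))) * (2*u)) * ((Complex.cos (t:ℂ))^jj * (2*u)^jj) := by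
          rw [e1]; ring
      _ = (jj+1:ℂ) * (Complex.I * (u^2-1)) * (1+u^2)^jj := by rw [hfac, hCpow]
      _ = Complex.I * ((jj+1:ℂ) * (u^2-1) * (1+u^2)^jj) := by ring
  have hfact_ne : (2:ℂ)^j * u^j ≠ 0 :=
    mul_ne_zero (pow_ne_zero j two_ne_zero) (pow_ne_zero j hu0)
  have := hmain.trans hrhs.symm
  exact mul_right_cancel₀ hfact_ne this

include hn in
lemma sumM_real (j : ℕ) (hj : j ≤ n) (t : ℝ) :
    ∑ k ∈ range (2*n), mu n k * (Real.cos (t + tnode n k))^j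
      = -(j:ℝ) * Real.sin t * (Real.cos t)^(j-1) := by
  have hM := sumM hn j hj t
  apply Complex.ofReal_injective
  have hL : ((∑ k ∈ range (2*n), mu n k * (Real.cos (t + tnode n k))^j : ℝ) : ℂ)
      = ∑ k ∈ range (2*n), (mu n k : ℂ) * (Complex.cos ((t + tnode n k:ℝ):ℂ))^j := by
    push_cast [Complex.ofReal_cos]
    rfl
  have hR : ((-(j:ℝ) * Real.sin t * (Real.cos t)^(j-1) : ℝ):ℂ)
      = -(j:ℂ) * Complex.sin (t:ℂ) * (Complex.cos (t:ℂ))^(j-1) := by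
    push_cast [Complex.ofReal_cos, Complex.ofReal_sin]
    ring
  rw [hL, hR, hM]

include hn in
lemma hasDeriv (p : Polynomial ℝ) (hdeg : p.natDegree ≤ n) (t : ℝ) :
    HasDerivAt (fun θ : ℝ => p.eval (Real.cos θ))
      (∑ k ∈ range (2*n), mu n k * p.eval (Real.cos (t + tnode n k))) t := by
  have hfun : (fun θ : ℝ => p.eval (Real.cos θ))
      = fun θ => ∑ j ∈ range (p.natDegree + 1), p.coeff j * (Real.cos θ)^j := by
    funext θ; exact Polynomial.eval_eq_sum_range _
  have hD : (∑ k ∈ range (2*n), mu n k * p.eval (Real.cos (t + tnode n k)))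
      = ∑ j ∈ range (p.natDegree + 1),
          p.coeff j * (-(j:ℝ) * Real.sin t * (Real.cos t)^(j-1)) := by
    have h1 : ∀ k ∈ range (2*n), mu n k * p.eval (Real.cos (t + tnode n k))
        = ∑ j ∈ range (p.natDegree+1), p.coeff j * (mu n k * (Real.cos (t+tnode n k))^j) := by
      intro k _
      rw [Polynomial.eval_eq_sum_range, Finset.mul_sum]
      apply Finset.sum_congr rfl
      intro j _; ring
    rw [Finset.sum_congr rfl h1, Finset.sum_comm]
    apply Finset.sum_congr rfl
    intro j hj
    rw [Finset.mem_range] at hj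
    rw [← Finset.mul_sum, sumM_real hn j (by omega) t]
  rw [hfun, hD]
  apply HasDerivAt.fun_sum
  intro j hj
  have h := (Real.hasDerivAt_cos t).fun_pow j
  have h2 := h.const_mul (p.coeff j)
  refine h2.congr_deriv ?_
  ring

include hn in
lemma deriv_bound (p : Polynomial ℝ)
    (hb : ∀ x ∈ Set.Icc (-1:ℝ) 1, |p.eval x| ≤ 1) (t : ℝ) :
    |∑ k ∈ range (2*n), mu n k * p.eval (Real.cos (t + tnode n k))| ≤ n := by
  calc |∑ k ∈ range (2*n), mu n k * p.eval (Real.cos (t + tnode n k))|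
      ≤ ∑ k ∈ range (2*n), |mu n k * p.eval (Real.cos (t + tnode n k))| :=
        Finset.abs_sum_le_sum_abs _ _
    _ ≤ ∑ k ∈ range (2*n), |mu n k| := by
        apply Finset.sum_le_sum
        intro k _
        rw [abs_mul]
        have hcc : Real.cos (t + tnode n k) ∈ Set.Icc (-1:ℝ) 1 :=
          ⟨Real.neg_one_le_cos _, Real.cos_le_one _⟩
        have := hb _ hcc
        nlinarith [abs_nonneg (mu n k), abs_nonneg (p.eval (Real.cos (t + tnode n k)))]
    _ = n := sum_abs_mu hn

include hn in
lemma cos_lipschitz (p : Polynomial ℝ) (hdeg : p.natDegree ≤ n)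
    (hb : ∀ x ∈ Set.Icc (-1:ℝ) 1, |p.eval x| ≤ 1) (a b : ℝ) :
    |p.eval (Real.cos b) - p.eval (Real.cos a)| ≤ n * |b - a| := by
  have := Convex.norm_image_sub_le_of_norm_hasDerivWithin_le
    (f := fun θ : ℝ => p.eval (Real.cos θ))
    (f' := fun t => ∑ k ∈ range (2*n), mu n k * p.eval (Real.cos (t + tnode n k)))
    (s := Set.univ) (C := n)
    (fun x _ => (hasDeriv hn p hdeg x).hasDerivWithinAt)
    (fun x _ => by simpa [Real.norm_eq_abs] using deriv_bound hn p hb x)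
    convex_univ (Set.mem_univ a) (Set.mem_univ b)
  simpa [Real.norm_eq_abs] using this

lemma arccos_lipschitz {Δ : ℝ} (hΔ : 0 < Δ) (hΔ1 : Δ < 1) {x y : ℝ}
    (hx : x ∈ Set.Icc (-Δ) Δ) (hy : y ∈ Set.Icc (-Δ) Δ) :
    |Real.arccos y - Real.arccos x| ≤ (1 / Real.sqrt (1 - Δ^2)) * |y - x| := by
  have hpos : 0 < 1 - Δ^2 := by nlinarith
  have hspos : 0 < Real.sqrt (1 - Δ^2) := Real.sqrt_pos.mpr hpos
  have := Convex.norm_image_sub_le_of_norm_hasDerivWithin_le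
    (f := Real.arccos)
    (f' := fun t => -(1 / Real.sqrt (1 - t^2)))
    (s := Set.Icc (-Δ) Δ) (C := 1 / Real.sqrt (1 - Δ^2))
    (fun t ht => by
      have h1 : t ≠ -1 := by rintro rfl; simp at ht; linarith [ht.1]
      have h2 : t ≠ 1 := by rintro rfl; simp at ht; linarith [ht.2]
      exact (Real.hasDerivAt_arccos h1 h2).hasDerivWithinAt)
    (fun t ht => by
      simp only [Real.norm_eq_abs, abs_neg]
      have ht2 : t^2 ≤ Δ^2 := by
        rcases ht with ⟨h1, h2⟩
        nlinarith
      have htpos : 0 < 1 - t^2 := by nlinarith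
      have hstpos : 0 < Real.sqrt (1 - t^2) := Real.sqrt_pos.mpr htpos
      rw [abs_of_pos (by positivity)]
      apply div_le_div_of_nonneg_left (by norm_num) hspos
      exact Real.sqrt_le_sqrt (by nlinarith))
    (convex_Icc _ _) hx hy
  simpa [Real.norm_eq_abs] using this

end
end BApx

open BApx in
/-- **Degree lower bound for bounded approximations**
(Proposition 3.18): if `p` approximates `f` to error `ε` on `S ⊆ [-Δ, Δ]` and
is bounded by `1` on `[-1, 1]`, then its degree is at least
`√(1-Δ²)·(|f(x) - f(y)| - 2ε)/|x - y|` for any distinct `x, y ∈ S`. -/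
theorem bounded_approx_degree_lower_bound
    (Δ : ℝ) (hΔ : 0 < Δ) (hΔ1 : Δ ≤ 1) (S : Set ℝ) (hS : S ⊆ Set.Icc (-Δ) Δ)
    (f : ℝ → ℝ) (ε : ℝ) (hε : 0 < ε) (p : Polynomial ℝ)
    (happrox : ∀ x ∈ S, |p.eval x - f x| ≤ ε)
    (hbound : ∀ x : ℝ, x ∈ Set.Icc (-1 : ℝ) 1 → |p.eval x| ≤ 1) :
    ∀ x ∈ S, ∀ y ∈ S, x ≠ y →
      (p.natDegree : ℝ) ≥ Real.sqrt (1 - Δ ^ 2) * ((|f x - f y| - 2 * ε) / |x - y|) := by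
  intro x hx y hy hxy
  have hxI : x ∈ Set.Icc (-Δ) Δ := hS hx
  have hyI : y ∈ Set.Icc (-Δ) Δ := hS hy
  have hx1 : -1 ≤ x := by linarith [hxI.1]
  have hx2 : x ≤ 1 := by linarith [hxI.2]
  have hy1 : -1 ≤ y := by linarith [hyI.1]
  have hy2 : y ≤ 1 := by linarith [hyI.2]
  have hD : 0 < |x - y| := abs_pos.mpr (sub_ne_zero.mpr hxy)
  have hfp : |f x - f y| ≤ |p.eval x - p.eval y| + 2*ε := by
    have h1 := happrox x hx
    have h2 := happrox y hy
    have : f x - f y = -(p.eval x - f x) + (p.eval x - p.eval y) + (p.eval y - f y) := by ring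
    rw [this]
    calc |(-(p.eval x - f x) + (p.eval x - p.eval y) + (p.eval y - f y))|
        ≤ |(-(p.eval x - f x) + (p.eval x - p.eval y))| + |p.eval y - f y| := abs_add_le _ _
      _ ≤ |(-(p.eval x - f x))| + |p.eval x - p.eval y| + |p.eval y - f y| := by
          have := abs_add_le (-(p.eval x - f x)) (p.eval x - p.eval y)
          linarith
      _ ≤ |p.eval x - p.eval y| + 2*ε := by
          rw [abs_neg]
          linarith
  by_cases hfe : |f x - f y| - 2*ε ≤ 0
  · have hrhs : Real.sqrt (1 - Δ^2) * ((|f x - f y| - 2 * ε) / |x - y|) ≤ 0 :=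
      mul_nonpos_of_nonneg_of_nonpos (Real.sqrt_nonneg _)
        (div_nonpos_of_nonpos_of_nonneg hfe (le_of_lt hD))
    have : (0:ℝ) ≤ p.natDegree := Nat.cast_nonneg _
    linarith
  push_neg at hfe
  rcases eq_or_lt_of_le hΔ1 with hΔeq | hΔlt
  · rw [show (1:ℝ) - Δ^2 = 0 from by rw [hΔeq]; norm_num, Real.sqrt_zero, zero_mul]
    exact Nat.cast_nonneg _
  -- now Δ < 1, numerator positive
  rcases Nat.eq_zero_or_pos p.natDegree with hn0 | hnpos
  · obtain ⟨c, rfl⟩ := Polynomial.natDegree_eq_zero.mp hn0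
    simp only [Polynomial.eval_C] at hfp
    simp only [sub_self, abs_zero, zero_add] at hfp
    linarith
  set n := p.natDegree with hndef
  have hn : 1 ≤ n := hnpos
  have hpos : 0 < 1 - Δ^2 := by nlinarith
  have hs : 0 < Real.sqrt (1 - Δ^2) := Real.sqrt_pos.mpr hpos
  -- Bernstein-type bound through arccos
  have hax : Real.cos (Real.arccos x) = x := Real.cos_arccos hx1 hx2
  have hay : Real.cos (Real.arccos y) = y := Real.cos_arccos hy1 hy2
  have hlip := cos_lipschitz hn p le_rfl hbound (Real.arccos y) (Real.arccos x)
  rw [hax, hay] at hlip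
  have harc := arccos_lipschitz hΔ hΔlt hyI hxI
  have key : |p.eval x - p.eval y| ≤ n * ((1 / Real.sqrt (1 - Δ^2)) * |x - y|) := by
    calc |p.eval x - p.eval y| ≤ (n:ℝ) * |Real.arccos x - Real.arccos y| := hlip
      _ ≤ n * ((1 / Real.sqrt (1 - Δ^2)) * |x - y|) := by
          apply mul_le_mul_of_nonneg_left _ (Nat.cast_nonneg n)
          exact harc
  have hPs : |p.eval x - p.eval y| * Real.sqrt (1 - Δ^2) ≤ n * |x - y| := by
    have h2 := mul_le_mul_of_nonneg_right key (le_of_lt hs)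
    have h3 : (n:ℝ) * ((1 / Real.sqrt (1 - Δ^2)) * |x - y|) * Real.sqrt (1 - Δ^2)
        = n * |x - y| := by
      field_simp
    rw [h3] at h2
    exact h2
  rw [ge_iff_le, mul_div_assoc']
  rw [div_le_iff₀ hD]
  nlinarith [hPs, hfp, hs, hD]
end

section
/- There exists a universal constant c > 0 with the following property. Let β ≥ 1 be real, δ ∈ (0, 1], and let q ∈ ℝ[X] be a polynomial of degree d such that |q(x) − exp(β·x)| ≤ 0.1 for all x ∈ [−1, 0] and |q(x)| ≤ 1 for all x ∈ [0, δ]. Then d ≥ c·β·√δ. -/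
open Real Polynomial

set_option maxHeartbeats 1000000


open Complex Metric in
lemma joukowski_eval (Q : ℂ[X]) (n : ℕ) (hn : Q.natDegree ≤ n) (w : ℂ) (hw : w ≠ 0) :
    ((Finset.range (n+1)).sum fun i =>
        Polynomial.C (Q.coeff i / 2^i) * (X^2+1)^i * X^(n-i)).eval w
      = w^n * Q.eval ((w + w⁻¹)/2) := by
  rw [Polynomial.eval_finset_sum,
    Polynomial.eval_eq_sum_range' (lt_of_le_of_lt hn (Nat.lt_succ_self n)), Finset.mul_sum]
  refine Finset.sum_congr rfl fun i hi => ?_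
  simp only [Polynomial.eval_mul, Polynomial.eval_pow, Polynomial.eval_C, Polynomial.eval_add,
    Polynomial.eval_one, Polynomial.eval_X]
  have hin : i ≤ n := Nat.lt_succ_iff.mp (Finset.mem_range.mp hi)
  have h1 : (w^2+1)^i = w^i * (w + w⁻¹)^i := by
    rw [← mul_pow]; congr 1; field_simp
  have h2 : w^i * w^(n-i) = w^n := by rw [← pow_add]; congr 1; omega
  calc Q.coeff i / 2^i * (w^2+1)^i * w^(n-i)
      = Q.coeff i / 2^i * (w+w⁻¹)^i * (w^i * w^(n-i)) := by rw [h1]; ring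
    _ = w^n * (Q.coeff i * ((w + w⁻¹)/2)^i) := by rw [h2, div_pow]; ring

open Complex Metric in
lemma bernstein_ineq (q : ℝ[X]) (M : ℝ)
    (hb : ∀ x ∈ Set.Icc (-1:ℝ) 1, |q.eval x| ≤ M) :
    ∀ x ∈ Set.Ioo (-1:ℝ) 1,
      |q.derivative.eval x| * Real.sqrt (1 - x^2) ≤ 12 * q.natDegree * M := by
  intro x hx
  have hM : 0 ≤ M := le_trans (abs_nonneg _) (hb 0 (by norm_num))
  set n := q.natDegree with hn
  rcases Nat.eq_zero_or_pos n with h0 | hpos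
  · rw [Polynomial.eq_C_of_natDegree_eq_zero h0]
    simp [h0]
  -- complex setup
  set Q : ℂ[X] := q.map Complex.ofRealHom with hQ
  have hQdeg : Q.natDegree ≤ n := Polynomial.natDegree_map_le
  set P : ℂ[X] := (Finset.range (n+1)).sum fun i =>
      Polynomial.C (Q.coeff i / 2^i) * (X^2+1)^i * X^(n-i) with hPdef
  have hP : ∀ w : ℂ, w ≠ 0 → P.eval w = w^n * Q.eval ((w + w⁻¹)/2) :=
    fun w hw => joukowski_eval Q n hQdeg w hw
  -- eval at real points
  have hQR : ∀ y : ℝ, Q.eval (y : ℂ) = ((q.eval y : ℝ) : ℂ) := by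
    intro y
    rw [hQ, Polynomial.eval_map]
    exact Polynomial.eval₂_at_apply Complex.ofRealHom y
  -- circle bound
  have hcirc : ∀ w : ℂ, ‖w‖ = 1 → ‖P.eval w‖ ≤ M := by
    intro w hw
    have hw0 : w ≠ 0 := by
      intro h; rw [h] at hw; simp at hw
    have hwe : w = Complex.exp (w.arg * I) := by
      conv_lhs => rw [← Complex.norm_mul_exp_arg_mul_I w]
      rw [hw]; simp
    set θ := w.arg
    have hinv : w⁻¹ = Complex.exp (-(θ * I)) := by
      rw [hwe, ← Complex.exp_neg]
    have hcos : (w + w⁻¹)/2 = ((Real.cos θ : ℝ) : ℂ) := by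
      rw [hwe, ← Complex.exp_neg, neg_mul_eq_neg_mul]
      rw [Complex.exp_mul_I, Complex.exp_mul_I]
      rw [Complex.ofReal_cos]
      push_cast
      rw [Complex.cos_neg, Complex.sin_neg]
      ring
    rw [hP w hw0, hcos, hQR]
    rw [norm_mul, norm_pow]
    have : ‖w‖ = 1 := hw
    rw [this, one_pow, one_mul, Complex.norm_real, Real.norm_eq_abs]
    exact hb _ ⟨Real.neg_one_le_cos θ, Real.cos_le_one θ⟩
  -- maximum modulus on unit disk
  have hdisk : ∀ w : ℂ, ‖w‖ ≤ 1 → ‖P.eval w‖ ≤ M := by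
    intro w hw
    have := Complex.norm_le_of_forall_mem_frontier_norm_le (U := ball (0:ℂ) 1)
      isBounded_ball ((P.differentiable).diffContOnCl)
      (fun z hz => by
        rw [frontier_ball (0:ℂ) one_ne_zero] at hz
        exact hcirc z (by simpa using hz))
      (z := w) ?_
    · exact this
    · rw [closure_ball (0:ℂ) one_ne_zero]
      simpa using hw
  -- annulus bound
  have hnR : (0:ℝ) < 1/(2*n) := by positivity
  have hann : ∀ w : ℂ, ‖w‖ ≤ 1 + 1/(2*n) → ‖P.eval w‖ ≤ M * 3 := by
    intro w hw
    have he : ((1:ℝ) + 1/(2*n))^(2*n) ≤ 3 := by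
      have h1 : (1:ℝ) + 1/(2*n) ≤ Real.exp (1/(2*n)) := by
        have := Real.add_one_le_exp (1/(2*(n:ℝ)))
        linarith
      calc ((1:ℝ) + 1/(2*n))^(2*n) ≤ (Real.exp (1/(2*n)))^(2*n) := by
            apply pow_le_pow_left₀ (by positivity) h1
        _ = Real.exp ((2*n) * (1/(2*n))) := by
            rw [← Real.exp_nat_mul]; push_cast; ring_nf
        _ = Real.exp 1 := by
            congr 1
            field_simp
        _ ≤ 3 := by
            have := Real.exp_one_lt_d9
            linarith
    rcases le_or_gt (‖w‖) 1 with h1 | h1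
    · have := hdisk w h1
      nlinarith
    · have hw0 : w ≠ 0 := by
        intro h; rw [h] at h1; simp at h1; linarith
      have hrefl : P.eval w = w^(2*n) * P.eval w⁻¹ := by
        rw [hP w hw0, hP w⁻¹ (inv_ne_zero hw0), inv_inv]
        rw [show w⁻¹ + w = w + w⁻¹ from add_comm _ _]
        rw [inv_pow, ← mul_assoc]
        congr 1
        rw [two_mul, pow_add]
        field_simp
      have hinvle : ‖w⁻¹‖ ≤ 1 := by
        rw [norm_inv]
        rw [inv_le_one_iff₀]
        right; linarith
      rw [hrefl, norm_mul, norm_pow]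
      have h2 : ‖w‖ ^ (2*n) ≤ (1 + 1/(2*(n:ℝ)))^(2*n) := by
        apply pow_le_pow_left₀ (norm_nonneg _)
        exact hw
      have h3 := hdisk w⁻¹ hinvle
      calc ‖w‖^(2*n) * ‖P.eval w⁻¹‖ ≤ (1 + 1/(2*(n:ℝ)))^(2*n) * M := by
            apply mul_le_mul h2 h3 (norm_nonneg _) (by positivity)
        _ ≤ M * 3 := by nlinarith
  -- the point on the circle
  set θ0 := Real.arccos x with hθ0
  have hx1 : -1 ≤ x := le_of_lt hx.1
  have hx2 : x ≤ 1 := le_of_lt hx.2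
  have hcosθ0 : Real.cos θ0 = x := Real.cos_arccos hx1 hx2
  have hsinθ0 : Real.sin θ0 = Real.sqrt (1 - x^2) := Real.sin_arccos x
  have hsinnn : 0 ≤ Real.sin θ0 :=
    Real.sin_nonneg_of_nonneg_of_le_pi (Real.arccos_nonneg x) (Real.arccos_le_pi x)
  set w0 : ℂ := Complex.exp (θ0 * I) with hw0def
  have habs0 : ‖w0‖ = 1 := Complex.norm_exp_ofReal_mul_I θ0
  have hw00 : w0 ≠ 0 := Complex.exp_ne_zero _
  set R : ℝ := 1/(2*(n:ℝ)) with hRdef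
  have hn1 : (1:ℝ) ≤ n := by exact_mod_cast hpos
  have hRle : R ≤ 1/2 := by
    rw [hRdef]
    rw [div_le_div_iff₀ (by positivity) (by norm_num)]
    linarith
  set h : ℂ → ℂ := fun w => P.eval w * (w^n)⁻¹ with hhdef
  have hne : ∀ w : ℂ, w ∈ closedBall w0 R → w ≠ 0 := by
    intro w hw h0
    rw [mem_closedBall, h0] at hw
    have : dist (0:ℂ) w0 = 1 := by
      simp [Complex.dist_eq, habs0]
    linarith [hRle, this ▸ hw]
  have hdiff : DiffContOnCl ℂ h (ball w0 R) := by
    apply DifferentiableOn.diffContOnCl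
    rw [closure_ball w0 (ne_of_gt hnR)]
    intro w hw
    exact ((P.differentiable.differentiableAt).mul
      (((differentiable_pow n) w).inv (pow_ne_zero n (hne w hw)))).differentiableWithinAt
  have hsphere : ∀ z ∈ sphere w0 R, ‖h z‖ ≤ 6*M := by
    intro z hz
    rw [mem_sphere_iff_norm] at hz
    have hzub : ‖z‖ ≤ 1 + R := by
      have h' : ‖z‖ ≤ ‖z - w0‖ + ‖w0‖ := by
        have := norm_add_le (z - w0) w0
        rwa [sub_add_cancel] at this
      rw [hz, show ‖w0‖ = 1 from habs0] at h'
      calc ‖z‖ = ‖z‖ := rfl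
        _ ≤ R + 1 := h'
        _ = 1 + R := by ring
    have hzlb : 1 - R ≤ ‖z‖ := by
      have h' : ‖w0‖ - ‖z‖ ≤ ‖w0 - z‖ := norm_sub_norm_le _ _
      rw [show ‖w0‖ = 1 from habs0, ← norm_neg (w0 - z), neg_sub, hz] at h'
      have hzn : ‖z‖ = ‖z‖ := rfl
      linarith
    have hz0 : z ≠ 0 := by
      intro h0; rw [h0] at hzlb; simp at hzlb; linarith
    have hPz : ‖P.eval z‖ ≤ M * 3 := hann z hzub
    have hpow : (1:ℝ)/2 ≤ (‖z‖)^n := by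
      have hb1 : ((1:ℝ) - R)^n ≤ (‖z‖)^n :=
        pow_le_pow_left₀ (by linarith) hzlb n
      have hb2 : (1:ℝ)/2 ≤ (1 - R)^n := by
        have hber := one_add_mul_le_pow (a := -R) (by linarith) n
        have hcalc : 1 + (n:ℝ) * (-R) = 1/2 := by
          rw [hRdef]; field_simp; ring
        calc (1:ℝ)/2 = 1 + (n:ℝ)*(-R) := hcalc.symm
          _ ≤ (1 + -R)^n := hber
          _ = (1 - R)^n := by ring_nf
      linarith
    have : ‖h z‖ = ‖P.eval z‖ * ((‖z‖)^n)⁻¹ := by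
      rw [hhdef]
      simp [norm_mul, norm_inv, norm_pow]
    rw [this]
    have hinvle : ((‖z‖)^n)⁻¹ ≤ 2 := by
      rw [inv_le_comm₀ (by positivity) (by norm_num)]
      linarith
    calc ‖P.eval z‖ * ((‖z‖)^n)⁻¹ ≤ (M*3) * 2 :=
          mul_le_mul hPz hinvle (by positivity) (by positivity)
      _ = 6*M := by ring
  have hcauchy : ‖deriv h w0‖ ≤ 6*M / R :=
    Complex.norm_deriv_le_of_forall_mem_sphere_norm_le hnR hdiff hsphere
  -- chain rule
  have hW : (w0 + w0⁻¹)/2 = ((x:ℝ) : ℂ) := by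
    rw [hw0def, ← Complex.exp_neg, ← neg_mul]
    rw [Complex.exp_mul_I, Complex.exp_mul_I]
    rw [← hcosθ0, Complex.ofReal_cos]
    rw [Complex.cos_neg, Complex.sin_neg]
    ring
  have hzder : HasDerivAt (fun w : ℂ => (w + w⁻¹)/2) ((1 + -(w0^2)⁻¹)/2) w0 :=
    ((hasDerivAt_id w0).add (hasDerivAt_inv hw00)).div_const 2
  have hg : HasDerivAt (fun w : ℂ => Q.eval ((w + w⁻¹)/2))
      (Q.derivative.eval ((x:ℝ):ℂ) * ((1 + -(w0^2)⁻¹)/2)) w0 := by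
    have := (Polynomial.hasDerivAt Q ((w0 + w0⁻¹)/2)).comp w0 hzder
    rw [hW] at this
    exact this
  have heq : (fun w : ℂ => Q.eval ((w + w⁻¹)/2)) =ᶠ[nhds w0] h := by
    have hmem : {w : ℂ | w ≠ 0} ∈ nhds w0 := isOpen_ne.mem_nhds hw00
    filter_upwards [hmem] with w hwne
    rw [hhdef]
    simp only
    rw [hP w hwne]
    rw [mul_comm (w^n), mul_assoc, mul_inv_cancel₀ (pow_ne_zero n hwne), mul_one]
  have hderiv_eq : Q.derivative.eval ((x:ℝ):ℂ) * ((1 + -(w0^2)⁻¹)/2) = deriv h w0 := by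
    rw [← hg.deriv]
    exact heq.deriv_eq
  -- compute the norm of the factor
  have hfact : ‖(1 + -(w0^2)⁻¹)/2‖ = Real.sin θ0 := by
    have h1 : (1 + -(w0^2)⁻¹ : ℂ) = w0⁻¹ * (w0 - w0⁻¹) := by
      field_simp
      ring
    have h2 : w0 - w0⁻¹ = 2 * Real.sin θ0 * I := by
      rw [hw0def, ← Complex.exp_neg, ← neg_mul]
      rw [Complex.exp_mul_I, Complex.exp_mul_I]
      rw [Complex.ofReal_sin]
      rw [Complex.cos_neg, Complex.sin_neg]
      ring
    rw [h1, h2]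
    simp only [norm_div, norm_mul, norm_inv, habs0, inv_one, one_mul, Complex.norm_I,
      Complex.norm_two, Complex.norm_real, Real.norm_eq_abs, mul_one]
    rw [_root_.abs_of_nonneg hsinnn]
    ring
  -- derivative of map
  have hQd : Q.derivative.eval ((x:ℝ):ℂ) = ((q.derivative.eval x : ℝ) : ℂ) := by
    rw [hQ, Polynomial.derivative_map, Polynomial.eval_map]
    exact Polynomial.eval₂_at_apply Complex.ofRealHom x
  -- put it together
  have hnorm : |q.derivative.eval x| * Real.sin θ0 ≤ 6*M/R := by
    have := congrArg norm hderiv_eq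
    rw [norm_mul, hQd, hfact] at this
    rw [Complex.norm_real, Real.norm_eq_abs] at this
    calc |q.derivative.eval x| * Real.sin θ0 = ‖deriv h w0‖ := this
      _ ≤ 6*M/R := hcauchy
  rw [← hsinθ0]
  have hfin : 6*M/R = 12*(n:ℝ)*M := by
    rw [hRdef]
    field_simp
    ring
  rw [hfin] at hnorm
  exact hnorm

/-- **Degree lower bound for bounded approximations of the exponential**
(Corollary 3.19): any polynomial `0.1`-close to `exp(βx)` on `[-1, 0]` and
bounded by `1` on `[0, δ]` has degree `Ω(β√δ)`. -/
theorem exp_bounded_approx_degree_lower_bound :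
    ∃ c : ℝ, 0 < c ∧
      ∀ β δ : ℝ, 1 ≤ β → 0 < δ → δ ≤ 1 →
        ∀ q : Polynomial ℝ,
          (∀ x : ℝ, x ∈ Set.Icc (-1 : ℝ) 0 → |q.eval x - Real.exp (β * x)| ≤ 0.1) →
          (∀ x : ℝ, x ∈ Set.Icc (0 : ℝ) δ → |q.eval x| ≤ 1) →
          (q.natDegree : ℝ) ≥ c * β * Real.sqrt δ := by
  refine ⟨1/100, by norm_num, ?_⟩
  intro β δ hβ hδ0 hδ1 q hleft hright
  set n := q.natDegree with hn
  have hexp1 : (2.7182818283 : ℝ) < Real.exp 1 := Real.exp_one_gt_d9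
  have hexp1' : Real.exp 1 < 2.7182818286 := Real.exp_one_lt_d9
  -- n ≥ 1
  have hn1 : 1 ≤ (n:ℝ) := by
    by_contra hcon
    push_neg at hcon
    have hn0 : n = 0 := by
      by_contra h0
      have : 1 ≤ n := Nat.one_le_iff_ne_zero.mpr h0
      exact absurd (by exact_mod_cast this) (not_le.mpr hcon)
    have hqC := Polynomial.eq_C_of_natDegree_eq_zero hn0
    have h1 := hleft 0 ⟨by norm_num, le_refl 0⟩
    have h2 := hleft (-1) ⟨le_refl _, by norm_num⟩
    rw [hqC] at h1 h2
    simp only [Polynomial.eval_C, mul_zero, Real.exp_zero, mul_neg_one] at h1 h2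
    rw [abs_le] at h1 h2
    have hee : Real.exp (-β) ≤ Real.exp (-1) := Real.exp_le_exp.mpr (by linarith)
    have he1 : Real.exp (-1) < 0.4 := by
      rw [Real.exp_neg]
      rw [inv_lt_comm₀ (by positivity) (by norm_num)]
      linarith
    have hp : 0 < Real.exp (-β) := Real.exp_pos _
    linarith [h1.1, h2.2]
  rcases le_or_gt β 5 with hβ5 | hβ5
  · have hsq : Real.sqrt δ ≤ 1 := by
      rw [show (1:ℝ) = Real.sqrt 1 from (Real.sqrt_one).symm]
      exact Real.sqrt_le_sqrt hδ1
    have : 1/100 * β * Real.sqrt δ ≤ 1/100 * 5 * 1 := by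
      apply mul_le_mul (by nlinarith [Real.sqrt_nonneg δ]) hsq (Real.sqrt_nonneg δ) (by norm_num)
    linarith
  -- main case : β > 5
  · have hlog10u : Real.log 10 ≤ 2.4 := by
      rw [Real.log_le_iff_le_exp (by norm_num)]
      have h04 : (1.4:ℝ) ≤ Real.exp 0.4 := by
        have := Real.add_one_le_exp (0.4:ℝ); linarith
      have : Real.exp 2.4 = Real.exp 1 * Real.exp 1 * Real.exp 0.4 := by
        rw [← Real.exp_add, ← Real.exp_add]; norm_num
      nlinarith
    have hlog10l : 2 ≤ Real.log 10 := by
      rw [Real.le_log_iff_exp_le (by norm_num)]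
      have : Real.exp 2 = Real.exp 1 * Real.exp 1 := by
        rw [← Real.exp_add]; norm_num
      nlinarith
    set t0 : ℝ := Real.log 10 / β with ht0
    have ht0pos : 0 < t0 := by positivity
    have ht0le : t0 ≤ 1/2 := by
      rw [ht0, div_le_iff₀ (by linarith)]
      linarith
    -- value at 0
    have h0 := hleft 0 ⟨by norm_num, le_refl 0⟩
    rw [mul_zero, Real.exp_zero, abs_le] at h0
    have hq0 : 0.9 ≤ q.eval 0 := by linarith [h0.1]
    -- value at -t0
    have hmt := hleft (-t0) ⟨by linarith, by linarith⟩
    have hexpt : Real.exp (β * (-t0)) = 0.1 := by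
      rw [ht0]
      rw [show β * -(Real.log 10 / β) = -Real.log 10 by field_simp]
      rw [Real.exp_neg, Real.exp_log (by norm_num)]
      norm_num
    rw [hexpt, abs_le] at hmt
    have hqt : q.eval (-t0) ≤ 0.2 := by linarith [hmt.2]
    -- mean value theorem
    obtain ⟨ξ, hξ, hslope⟩ := exists_hasDerivAt_eq_slope (fun y => q.eval y)
      (fun y => q.derivative.eval y) (show -t0 < 0 by linarith)
      (q.continuous.continuousOn) (fun y _ => q.hasDerivAt y)
    -- derivative lower bound
    have hξmem : ξ ∈ Set.Ioo (-t0) 0 := hξ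
    have hder : 0.29 * β ≤ q.derivative.eval ξ := by
      rw [hslope]
      rw [show (0:ℝ) - -t0 = t0 by ring]
      rw [le_div_iff₀ ht0pos]
      have : 0.29 * β * t0 ≤ 0.7 := by
        rw [ht0]
        rw [show 0.29 * β * (Real.log 10 / β) = 0.29 * Real.log 10 by field_simp]
        linarith
      linarith
    -- global bound on [-1, δ]
    have hbound : ∀ y ∈ Set.Icc (-1:ℝ) δ, |q.eval y| ≤ 1.1 := by
      intro y hy
      rcases le_or_gt y 0 with hy0 | hy0
      · have := hleft y ⟨hy.1, hy0⟩
        have hexpy : Real.exp (β * y) ≤ 1 := by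
          rw [show (1:ℝ) = Real.exp 0 from (Real.exp_zero).symm]
          apply Real.exp_le_exp.mpr
          nlinarith
        have hexpyp : 0 < Real.exp (β * y) := Real.exp_pos _
        rw [abs_le] at this ⊢
        constructor <;> linarith [this.1, this.2]
      · have := hright y ⟨le_of_lt hy0, hy.2⟩
        linarith [abs_nonneg (q.eval y)]
    -- affine rescaling to [-1, 1]
    set b : ℝ := (δ+1)/2 with hbdef
    set a : ℝ := (δ-1)/2 with hadef
    have hbpos : 0 < b := by rw [hbdef]; linarith
    set r : ℝ[X] := q.comp (Polynomial.C b * Polynomial.X + Polynomial.C a) with hrdef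
    have hrdeg : r.natDegree = n := by
      rw [hrdef, Polynomial.natDegree_comp, Polynomial.natDegree_linear (ne_of_gt hbpos), mul_one]
    have hrval : ∀ t : ℝ, r.eval t = q.eval (b*t + a) := by
      intro t
      rw [hrdef, Polynomial.eval_comp]
      simp
    have hrbound : ∀ t ∈ Set.Icc (-1:ℝ) 1, |r.eval t| ≤ 1.1 := by
      intro t ht
      rw [hrval t]
      apply hbound
      have hab : b*t + a = b*(t+1) - 1 := by rw [hadef, hbdef]; ring
      have hδb : δ = 2*b - 1 := by rw [hbdef]; ring
      have h1 : 0 ≤ b*(t+1) := mul_nonneg hbpos.le (by linarith [ht.1])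
      have h2 : b*(t+1) ≤ b*2 := by nlinarith [ht.2, hbpos]
      constructor
      · rw [hab] at *; linarith
      · rw [hab, hδb]; linarith
    have hrder : ∀ t : ℝ, r.derivative.eval t = b * q.derivative.eval (b*t + a) := by
      intro t
      rw [hrdef, Polynomial.derivative_comp]
      simp [Polynomial.eval_comp]
    set t : ℝ := (ξ - a)/b with htdef
    have hbt : b*t + a = ξ := by rw [htdef]; field_simp; ring
    have hξ1 : -(1:ℝ)/2 < ξ := by
      have := hξmem.1; linarith
    have hξ2 : ξ < 0 := hξmem.2
    have htIoo : t ∈ Set.Ioo (-1:ℝ) 1 := by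
      constructor
      · rw [htdef, lt_div_iff₀ hbpos]; nlinarith
      · rw [htdef, div_lt_iff₀ hbpos]; nlinarith
    have hbern := bernstein_ineq r 1.1 hrbound t htIoo
    rw [hrdeg, hrder, hbt] at hbern
    -- identify sqrt term
    have hsq1 : Real.sqrt (1 - t^2) * b = Real.sqrt ((δ - ξ)*(ξ+1)) := by
      rw [← Real.sqrt_sq (le_of_lt hbpos), ← Real.sqrt_mul (by nlinarith [htIoo.1, htIoo.2])]
      congr 1
      have hb0 : b ≠ 0 := ne_of_gt hbpos
      rw [htdef]
      field_simp
      ring_nf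
      rw [hbdef, hadef]; ring
    have hq'pos : 0 ≤ q.derivative.eval ξ := by nlinarith
    have habsb : |b * q.derivative.eval ξ| = b * q.derivative.eval ξ :=
      abs_of_nonneg (mul_nonneg hbpos.le hq'pos)
    rw [habsb] at hbern
    have hst : 0 ≤ Real.sqrt (1 - t^2) := Real.sqrt_nonneg _
    have h1 : 0.29*β * (Real.sqrt (1-t^2) * b) ≤ 12*n*1.1 := by
      calc 0.29*β * (Real.sqrt (1-t^2) * b)
          ≤ q.derivative.eval ξ * (Real.sqrt (1-t^2)*b) :=
            mul_le_mul_of_nonneg_right hder (mul_nonneg hst hbpos.le)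
        _ = b * q.derivative.eval ξ * Real.sqrt (1-t^2) := by ring
        _ ≤ 12*n*1.1 := hbern
    rw [hsq1] at h1
    have h2 : Real.sqrt (δ/2) ≤ Real.sqrt ((δ-ξ)*(ξ+1)) := by
      apply Real.sqrt_le_sqrt
      nlinarith
    have h3 : 0.7 * Real.sqrt δ ≤ Real.sqrt (δ/2) := by
      rw [show δ/2 = δ * (1/2) by ring, Real.sqrt_mul hδ0.le]
      have h4 : (0.7:ℝ) ≤ Real.sqrt (1/2) := by
        nlinarith [Real.sq_sqrt (show (0:ℝ) ≤ 1/2 by norm_num),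
          Real.sqrt_nonneg (1/2:ℝ)]
      nlinarith [Real.sqrt_nonneg δ]
    have hs0 : 0 ≤ Real.sqrt δ := Real.sqrt_nonneg δ
    have hβpos : (0:ℝ) < β := by linarith
    have hchain : 0.29*β*(0.7*Real.sqrt δ) ≤ 12*n*1.1 := by
      calc 0.29*β*(0.7*Real.sqrt δ) ≤ 0.29*β*(Real.sqrt ((δ-ξ)*(ξ+1))) := by
            apply mul_le_mul_of_nonneg_left (le_trans h3 h2) (by linarith)
        _ ≤ 12*n*1.1 := h1
    nlinarith [hchain, mul_nonneg hβpos.le hs0]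
end

section
/- There exist universal constants C > 0 and c > 0 such that for every natural number n ≥ 0 and all reals x, y with |y| ≤ c, the Chebyshev polynomial of the first kind evaluated at the complex number x + iy satisfies: if |x| ≤ 1 then |T_n(x + iy)| ≤ (1 + C·√|y|)^n, and if |x| > 1 then |T_n(x + iy)| ≤ (|x| + √(x² − 1) + C·√|x·y|)^n. -/
set_option maxHeartbeats 2000000

open Real Polynomial Complex


open Real

lemma real_key (a b x y : ℝ) (hb : 0 ≤ b)
    (hx : x = Real.cos a * Real.cosh b) (hy : y = -(Real.sin a * Real.sinh b))
    (hyc : |y| ≤ 1/4) :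
    (|x| ≤ 1 → Real.exp b ≤ 1 + 3 * Real.sqrt |y|) ∧
    (1 < |x| → Real.exp b ≤ |x| + Real.sqrt (x ^ 2 - 1) + 3 * Real.sqrt |x * y|) := by
  set cs := |Real.cos a| with hcs
  set sn := |Real.sin a| with hsn
  set ch := Real.cosh b with hch
  set sh := Real.sinh b with hsh
  have hch1 : 1 ≤ ch := Real.one_le_cosh b
  have hsh0 : 0 ≤ sh := Real.sinh_nonneg_iff.mpr hb
  have hpyth : ch ^ 2 = sh ^ 2 + 1 := Real.cosh_sq b
  have htrig : sn ^ 2 + cs ^ 2 = 1 := by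
    rw [hsn, hcs, _root_.sq_abs, _root_.sq_abs]; exact Real.sin_sq_add_cos_sq a
  have hexp : Real.exp b = ch + sh := (Real.cosh_add_sinh b).symm
  have hchsh : ch ≤ 1 + sh := by
    have := Real.cosh_sub_sinh b
    have h2 : Real.exp (-b) ≤ 1 := Real.exp_le_one_iff.mpr (by linarith)
    linarith
  have hcs0 : 0 ≤ cs := abs_nonneg _
  have hsn0 : 0 ≤ sn := abs_nonneg _
  have hcs1 : cs ≤ 1 := Real.abs_cos_le_one a
  have hsn1 : sn ≤ 1 := Real.abs_sin_le_one a
  have hxabs : |x| = cs * ch := by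
    rw [hx, abs_mul, _root_.abs_of_pos (by linarith : (0:ℝ) < ch)]
  have hyabs : |y| = sn * sh := by
    rw [hy, abs_neg, abs_mul, _root_.abs_of_nonneg hsh0]
  constructor
  · intro hx1
    -- sn * ch ≥ sh
    have h1 : sh ≤ sn * ch := by
      have hx2 : cs ^ 2 * ch ^ 2 ≤ 1 := by
        have := abs_nonneg x
        nlinarith [hxabs]
      nlinarith [mul_nonneg hsn0 (by linarith : (0:ℝ) ≤ ch)]
    have hysh : sn * sh ≤ 1/4 := by rw [← hyabs]; exact hyc
    have hsh1 : sh ≤ 1 := by nlinarith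
    have hch2 : ch ≤ 2 := by nlinarith
    -- 2 sh ≤ 3 √(sn sh)
    have key : 2 * sh ≤ 3 * Real.sqrt (sn * sh) := by
      have h4 : (2 * sh) ^ 2 ≤ 9 * (sn * sh) := by nlinarith
      have h5 : 2 * sh = Real.sqrt ((2 * sh) ^ 2) := (Real.sqrt_sq (by linarith)).symm
      rw [h5]
      calc Real.sqrt ((2*sh)^2) ≤ Real.sqrt (9 * (sn * sh)) := Real.sqrt_le_sqrt h4
        _ = 3 * Real.sqrt (sn * sh) := by
            rw [Real.sqrt_mul (by norm_num), show (9:ℝ) = 3^2 by norm_num,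
              Real.sqrt_sq (by norm_num)]
    rw [hexp, hyabs]; linarith
  · intro hx1
    rw [hxabs] at hx1
    have hcsp : 0 < cs := by nlinarith
    have hx2 : x ^ 2 = cs ^ 2 * ch ^ 2 := by
      rw [hx]; rw [hcs, hch]; rw [mul_pow, _root_.sq_abs]
    -- cs * sh ≥ sn
    have hx2' : 1 ≤ cs ^ 2 * ch ^ 2 := by nlinarith
    have h1 : sn ≤ cs * sh := by
      have hs : sn ^ 2 ≤ (cs * sh) ^ 2 := by
        have : (cs * sh) ^ 2 = cs ^ 2 * ch ^ 2 - cs ^ 2 := by ring_nf; nlinarith [hpyth]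
        nlinarith
      have h2 : 0 ≤ cs * sh := mul_nonneg hcs0 hsh0
      nlinarith
    -- ch * sn ≤ 2 * cs * sh
    have h2 : ch * sn ≤ 2 * (cs * sh) := by
      rcases le_or_gt ch 2 with h | h
      · nlinarith
      · have hsh2 : ch ≤ 2 * sh := by nlinarith
        have hyv : sn * sh ≤ 1/4 := by rw [← hyabs]; exact hyc
        have : ch * sn ≤ 2 * (sh * sn) := by nlinarith
        nlinarith
    have hx21 : 0 ≤ x ^ 2 - 1 := by nlinarith
    have hsq : Real.sqrt (x^2-1) ^ 2 = x^2 - 1 := Real.sq_sqrt hx21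
    have hsqnn : 0 ≤ Real.sqrt (x^2-1) := Real.sqrt_nonneg _
    -- sh ≤ √(x²-1) + ch sn
    have h3 : sh ≤ Real.sqrt (x^2-1) + ch * sn := by
      have hsh2 : sh ^ 2 = x^2 - 1 + ch^2 * sn^2 := by nlinarith
      have hR : (0:ℝ) ≤ Real.sqrt (x^2-1) + ch * sn := by positivity
      have hle : sh ^ 2 ≤ (Real.sqrt (x^2-1) + ch * sn) ^ 2 := by
        have expand : (Real.sqrt (x^2-1) + ch * sn) ^ 2
            = (x^2-1) + 2 * Real.sqrt (x^2-1) * (ch * sn) + (ch * sn)^2 := by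
          rw [add_sq, hsq]
        nlinarith [mul_nonneg (mul_nonneg hsqnn (by linarith : (0:ℝ) ≤ ch)) hsn0]
      calc sh = Real.sqrt (sh ^ 2) := (Real.sqrt_sq hsh0).symm
        _ ≤ Real.sqrt ((Real.sqrt (x^2-1) + ch * sn) ^ 2) := Real.sqrt_le_sqrt hle
        _ = _ := Real.sqrt_sq hR
    -- ch ≤ |x| + ch sn
    have h4 : ch ≤ cs * ch + ch * sn := by
      have hcsn : 1 - cs ≤ sn := by nlinarith
      nlinarith [mul_le_mul_of_nonneg_left hcsn (by linarith : (0:ℝ) ≤ ch)]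
    -- 2 ch sn ≤ 3 √(|x||y|)
    have hxyabs : |x * y| = (cs * ch) * (sn * sh) := by
      rw [abs_mul, hxabs, hyabs]
    have key : 2 * (ch * sn) ≤ 3 * Real.sqrt |x * y| := by
      have h5 : (2 * (ch * sn)) ^ 2 ≤ 9 * |x * y| := by
        rw [hxyabs]
        have p1 : (0:ℝ) ≤ ch * sn := mul_nonneg (by linarith) hsn0
        have p2 : (ch*sn)*(ch*sn) ≤ (2*(cs*sh))*(ch*sn) := mul_le_mul_of_nonneg_right h2 p1
        nlinarith [p2, mul_nonneg (mul_nonneg hcs0 hsh0) p1]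
      have h6 : 2 * (ch * sn) = Real.sqrt ((2 * (ch * sn)) ^ 2) :=
        (Real.sqrt_sq (by positivity)).symm
      rw [h6]
      calc Real.sqrt ((2*(ch*sn))^2) ≤ Real.sqrt (9 * |x*y|) := Real.sqrt_le_sqrt h5
        _ = 3 * Real.sqrt |x*y| := by
            rw [Real.sqrt_mul (by norm_num), show (9:ℝ) = 3^2 by norm_num,
              Real.sqrt_sq (by norm_num)]
    rw [hexp, hxabs]
    linarith

lemma abs_cos_le_exp (w : ℂ) : ‖Complex.cos w‖ ≤ Real.exp |w.im| := by
  rw [Complex.cos]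
  have h1 : ‖Complex.exp (w * Complex.I)‖ = Real.exp (-w.im) := by
    rw [Complex.norm_exp]; congr 1; simp
  have h2 : ‖Complex.exp (-w * Complex.I)‖ = Real.exp (w.im) := by
    rw [Complex.norm_exp]; congr 1; simp
  calc ‖(Complex.exp (w * Complex.I) + Complex.exp (-w * Complex.I)) / 2‖
      ≤ (‖Complex.exp (w * Complex.I)‖ + ‖Complex.exp (-w * Complex.I)‖) / 2 := by
        rw [norm_div]
        simp only [Complex.norm_two]
        gcongr
        exact norm_add_le _ _
    _ = (Real.exp (-w.im) + Real.exp w.im) / 2 := by rw [h1, h2]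
    _ ≤ Real.exp |w.im| := by
        have e1 : Real.exp (-w.im) ≤ Real.exp |w.im| := Real.exp_le_exp.mpr (neg_le_abs _)
        have e2 : Real.exp w.im ≤ Real.exp |w.im| := Real.exp_le_exp.mpr (le_abs_self _)
        linarith

/-- **Growth of Chebyshev polynomials near `[-1, 1]` in the complex plane**
(Lemma 3.21): for `|y| ≤ c`, `|T_n(x + iy)| ≤ (1 + C√|y|)^n` when `|x| ≤ 1`,
and `|T_n(x + iy)| ≤ (|x| + √(x²-1) + C√|xy|)^n` when `|x| > 1`. -/
theorem chebyshev_complex_growth :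
    ∃ C c : ℝ, 0 < C ∧ 0 < c ∧
      ∀ (n : ℕ) (x y : ℝ), |y| ≤ c →
        (|x| ≤ 1 →
          ‖(Polynomial.Chebyshev.T ℂ (n : ℤ)).eval ((x : ℂ) + (y : ℂ) * Complex.I)‖ ≤
            (1 + C * Real.sqrt |y|) ^ n) ∧
        (1 < |x| →
          ‖(Polynomial.Chebyshev.T ℂ (n : ℤ)).eval ((x : ℂ) + (y : ℂ) * Complex.I)‖ ≤
            (|x| + Real.sqrt (x ^ 2 - 1) + C * Real.sqrt |x * y|) ^ n) := by
  refine ⟨3, 1/4, by norm_num, by norm_num, fun n x y hyc => ?_⟩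
  obtain ⟨θ₀, hθ₀⟩ := Complex.cos_surjective ((x : ℂ) + (y : ℂ) * Complex.I)
  set θ : ℂ := if 0 ≤ θ₀.im then θ₀ else -θ₀ with hθdef
  have hθcos : Complex.cos θ = (x : ℂ) + (y : ℂ) * Complex.I := by
    rw [hθdef]; split_ifs with h
    · exact hθ₀
    · rw [Complex.cos_neg]; exact hθ₀
  have hb : 0 ≤ θ.im := by
    rw [hθdef]; split_ifs with h
    · exact h
    · simp; linarith
  set a : ℝ := θ.re
  set b : ℝ := θ.im
  have hcoseq := Complex.cos_eq θ
  rw [hθcos] at hcoseq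
  have hx : x = Real.cos a * Real.cosh b := by
    have := congrArg Complex.re hcoseq
    simpa [← Complex.ofReal_cos, ← Complex.ofReal_sin, ← Complex.ofReal_cosh,
      ← Complex.ofReal_sinh, Complex.ext_iff] using this
  have hy : y = -(Real.sin a * Real.sinh b) := by
    have := congrArg Complex.im hcoseq
    simp [← Complex.ofReal_cos, ← Complex.ofReal_sin, ← Complex.ofReal_cosh,
      ← Complex.ofReal_sinh, Complex.ext_iff] at this
    linarith
  have hkey := real_key a b x y hb hx hy hyc
  -- the abs bound
  have habs : ‖(Polynomial.Chebyshev.T ℂ (n : ℤ)).eval ((x : ℂ) + (y : ℂ) * Complex.I)‖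
      ≤ Real.exp b ^ n := by
    rw [← hθcos, Polynomial.Chebyshev.T_complex_cos]
    calc ‖Complex.cos (((n : ℤ) : ℂ) * θ)‖ ≤ Real.exp |(((n : ℤ) : ℂ) * θ).im| :=
          abs_cos_le_exp _
      _ = Real.exp b ^ n := by
          have : (((n : ℤ) : ℂ) * θ).im = (n : ℝ) * b := by simp; exact Or.inl rfl
          rw [this, _root_.abs_of_nonneg (by positivity), ← Real.exp_nat_mul]
  refine ⟨fun hx1 => ?_, fun hx1 => ?_⟩
  · refine habs.trans (pow_le_pow_left₀ (Real.exp_nonneg b) (hkey.1 hx1) n)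
  · refine habs.trans (pow_le_pow_left₀ (Real.exp_nonneg b) (hkey.2 hx1) n)
end
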